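/- arXiv:2308.10655 — 4 statements merged into one kernel-verified Lean document; each statement's English description precedes it below -/
import Mathlib

section
/- Let p be any primitive and let p_1, ..., p_n be primitives that always succeed without needing the store (each p_i is either a tell primitive or a graphical primitive). Then the guarded list GL = [p → p_1,...,p_n] refines the sequential composition SC = p; p_1; ...; p_n, that is, for every store τ, every history in Oh(GL)(τ) is a contraction of some history in Oh(SC)(τ). Consequently, any reachability property established on the stores generated by executing GL from a store τ is also established on the stores generated by executing SC from τ. -/
namespace Bach

/-- Primitives: the store primitives tell/ask/nask/get over si-terms `I`,
together with graphical primitives from `G`. -/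
inductive Prim (I : Type) (G : Type) where
  | tell (t : I)
  | ask (t : I)
  | nask (t : I)
  | get (t : I)
  | gr (g : G)

/-- A store is a finite multiset of si-terms. -/
abbrev Store (I : Type) := Multiset I

/-- One-step semantics of primitives: `primStep p σ τ` iff `⟨p,σ⟩ → ⟨E,τ⟩`:
`tell(t)` adds `t`; `ask(t)` requires `t` present; `nask(t)` requires `t` absent;
`get(t)` removes one occurrence of `t`; graphical primitives always succeed
leaving the store unchanged. -/
def primStep {I G : Type} : Prim I G → Store I → Store I → Prop
  | .tell t, σ, τ => τ = t ::ₘ σ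
  | .ask t, σ, τ => t ∈ σ ∧ τ = σ
  | .nask t, σ, τ => t ∉ σ ∧ τ = σ
  | .get t, σ, τ => σ = t ::ₘ τ
  | .gr _, σ, τ => τ = σ

/-- Successive execution of a list of primitives. -/
def listExec {I G : Type} : List (Prim I G) → Store I → Store I → Prop
  | [], σ, τ => τ = σ
  | p :: l, σ, τ => ∃ ρ, primStep p σ ρ ∧ listExec l ρ τ

/-- Agents: primitives, guarded lists `[p → p₁,…,pₙ]`, sequential (`;`),
parallel (`∥`) and choice (`+`) composition. -/
inductive Agent (I : Type) (G : Type) where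
  | prim (p : Prim I G)
  | glist (p : Prim I G) (l : List (Prim I G))
  | seq (A B : Agent I G)
  | par (A B : Agent I G)
  | choice (A B : Agent I G)

/-- Transition relation: `Step A σ o τ` means `⟨A,σ⟩ → ⟨o,τ⟩`, where `o = none`
stands for the terminated symbol `E` (and `E;A`, `E∥A`, `A∥E` are identified
with `A`).  A guarded list makes a single transition from `σ` to `τ` iff its
guard makes a transition from `σ` to some `ρ` and executing the remaining
primitives successively from `ρ` ends in `τ`. -/
inductive Step {I G : Type} : Agent I G → Store I → Option (Agent I G) → Store I → Prop
  | prim {p σ τ} : primStep p σ τ → Step (.prim p) σ none τ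
  | glist {p l σ ρ τ} : primStep p σ ρ → listExec l ρ τ → Step (.glist p l) σ none τ
  | seqE {A B σ τ} : Step A σ none τ → Step (.seq A B) σ (some B) τ
  | seqS {A A' B σ τ} : Step A σ (some A') τ → Step (.seq A B) σ (some (.seq A' B)) τ
  | parLE {A B σ τ} : Step A σ none τ → Step (.par A B) σ (some B) τ
  | parLS {A A' B σ τ} : Step A σ (some A') τ → Step (.par A B) σ (some (.par A' B)) τ
  | parRE {A B σ τ} : Step B σ none τ → Step (.par A B) σ (some A) τ
  | parRS {A B B' σ τ} : Step B σ (some B') τ → Step (.par A B) σ (some (.par A B')) τ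
  | choiceL {A B σ o τ} : Step A σ o τ → Step (.choice A B) σ o τ
  | choiceR {A B σ o τ} : Step B σ o τ → Step (.choice A B) σ o τ

/-- Configurations `⟨A,σ⟩`, with `none` standing for the terminated symbol `E`. -/
abbrev Conf (I G : Type) := Option (Agent I G) × Store I

/-- Step relation on configurations. -/
def CStep {I G : Type} : Conf I G → Conf I G → Prop
  | (some A, σ), (o, τ) => Step A σ o τ
  | (none, _), _ => False

/-- Observables `Of(A)`: final stores of finite computations from the empty store,
marked `true` (= δ⁺, success: ending in `E`) or `false` (= δ⁻, deadlock: ending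
stuck in some agent `B ≠ E`). -/
def Obs {I G : Type} (A : Agent I G) : Set (Store I × Bool) :=
  {x | Relation.ReflTransGen CStep ((some A, (0 : Store I)) : Conf I G) (none, x.1) ∧
        x.2 = true}
  ∪ {x | (∃ B, Relation.ReflTransGen CStep ((some A, (0 : Store I)) : Conf I G) (some B, x.1) ∧
          ∀ c, ¬ CStep ((some B, x.1) : Conf I G) c) ∧ x.2 = false}

/-- A language is a set of agents closed under `;`, `∥` and `+`. -/
def IsLanguage {I G : Type} (L : Set (Agent I G)) : Prop :=
  (∀ A B, A ∈ L → B ∈ L → Agent.seq A B ∈ L) ∧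
  (∀ A B, A ∈ L → B ∈ L → Agent.par A B ∈ L) ∧
  (∀ A B, A ∈ L → B ∈ L → Agent.choice A B ∈ L)

/-- `IsModularEmbedding C D L' L`: the coder `C` maps `L'` into `L` and is
compositional w.r.t. `;`, `∥`, `+` (property P₂); the element-wise decoder `D`
preserves the termination mark δ⁺/δ⁻ (property P₃); and for every `A ∈ L'`,
`Of(A) = { D x : x ∈ Of(C A) }` (commuting diagram, with P₁ built in by taking
`D` element-wise). -/
def IsModularEmbedding {I G : Type} (C : Agent I G → Agent I G)
    (D : Store I × Bool → Store I × Bool) (L' L : Set (Agent I G)) : Prop :=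
  (∀ A ∈ L', C A ∈ L) ∧
  (∀ A B, A ∈ L' → B ∈ L' → C (Agent.seq A B) = Agent.seq (C A) (C B)) ∧
  (∀ A B, A ∈ L' → B ∈ L' → C (Agent.par A B) = Agent.par (C A) (C B)) ∧
  (∀ A B, A ∈ L' → B ∈ L' → C (Agent.choice A B) = Agent.choice (C A) (C B)) ∧
  (∀ x, (D x).2 = x.2) ∧
  (∀ A ∈ L', Obs A = D '' Obs (C A))

/-- Modular embedding of `L'` into `L`, written `L' ≤ L`. -/
def ModEmbed {I G : Type} (L' L : Set (Agent I G)) : Prop :=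
  ∃ C D, IsModularEmbedding C D L' L

/-- Kinds of store primitives. -/
inductive PKind where
  | ask | nask | get | tell

/-- The primitive uses only store-primitive kinds from `X`
(graphical primitives are always allowed). -/
def primIn {I G : Type} (X : Set PKind) : Prim I G → Prop
  | .tell _ => PKind.tell ∈ X
  | .ask _ => PKind.ask ∈ X
  | .nask _ => PKind.nask ∈ X
  | .get _ => PKind.get ∈ X
  | .gr _ => True

/-- All primitives occurring in the agent use only kinds from `X`. -/
def agentIn {I G : Type} (X : Set PKind) : Agent I G → Prop
  | .prim p => primIn X p
  | .glist p l => primIn X p ∧ ∀ q ∈ l, primIn X q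
  | .seq A B => agentIn X A ∧ agentIn X B
  | .par A B => agentIn X A ∧ agentIn X B
  | .choice A B => agentIn X A ∧ agentIn X B

/-- The agent contains no guarded list construct. -/
def glFree {I G : Type} : Agent I G → Prop
  | .prim _ => True
  | .glist _ _ => False
  | .seq A B => glFree A ∧ glFree B
  | .par A B => glFree A ∧ glFree B
  | .choice A B => glFree A ∧ glFree B

/-- `gdLg(X)`: the fragment with guarded lists using store primitives from `X`. -/
def gdLg {I G : Type} (X : Set PKind) : Set (Agent I G) := {A | agentIn X A}

/-- `rLg(X)`: the fragment without guarded lists using store primitives from `X`. -/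
def rLg {I G : Type} (X : Set PKind) : Set (Agent I G) := {A | agentIn X A ∧ glFree A}

/-- Computational histories: finite sequences of stores ended by a success mark
δ⁺ (`true`) or deadlock mark δ⁻ (`false`), or infinite sequences of stores. -/
inductive Hist (I : Type) where
  | fin (l : List (Store I)) (success : Bool)
  | inf (f : ℕ → Store I)

/-- History-based operational semantics `Oh(A)(τ)`: the sequences of stores along
maximal transition sequences from `⟨A,τ⟩`, marked δ⁺ if ending in `E`, δ⁻ if
ending stuck in a non-`E` agent, and infinite otherwise. -/
def Oh {I G : Type} (A : Agent I G) (τ : Store I) : Set (Hist I) :=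
  {h | ∃ cs : List (Conf I G),
      cs.Chain' CStep ∧ cs.head? = some (some A, τ) ∧
      (((∃ σ, cs.getLast? = some ((none : Option (Agent I G)), σ)) ∧
          h = Hist.fin (cs.map Prod.snd) true) ∨
       ((∃ B σ, cs.getLast? = some (some B, σ) ∧ ∀ c, ¬ CStep ((some B, σ) : Conf I G) c) ∧
          h = Hist.fin (cs.map Prod.snd) false))}
  ∪ {h | ∃ f : ℕ → Conf I G, f 0 = (some A, τ) ∧ (∀ n, CStep (f n) (f (n + 1))) ∧
      h = Hist.inf fun n => (f n).2}

/-- `Contraction h_c h` (`h_c ⪯ h`): `h_c` is obtained from `h` by removing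
finitely many (possibly zero) stores, never a termination mark. -/
def Contraction {I : Type} : Hist I → Hist I → Prop
  | .fin lc bc, .fin l b => bc = b ∧ lc.Sublist l
  | .inf fc, .inf f =>
      ∃ g : ℕ → ℕ, StrictMono g ∧ (Set.range g)ᶜ.Finite ∧ ∀ n, fc n = f (g n)
  | _, _ => False

/-- `FCon F lc l`: the list `lc` of stores is an F-preserving contraction of `l`:
each removed store `ρ` agrees on `F` with the next kept store. -/
inductive FCon {I : Type} (F : Store I → Prop) : List (Store I) → List (Store I) → Prop
  | nil : FCon F [] []
  | keep {σ lc l} : FCon F lc l → FCon F (σ :: lc) (σ :: l)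
  | drop {σ ρ lc l} : (F ρ ↔ F σ) → FCon F (σ :: lc) l → FCon F (σ :: lc) (ρ :: l)

/-- `FPCon F h_c h` (`h_c ≪_F h`): `h_c` is an F-preserving contraction of `h`:
a contraction in which every removed store agrees on `F` with the next kept store. -/
def FPCon {I : Type} (F : Store I → Prop) : Hist I → Hist I → Prop
  | .fin lc bc, .fin l b => bc = b ∧ FCon F lc l
  | .inf fc, .inf f =>
      ∃ g : ℕ → ℕ, StrictMono g ∧ (Set.range g)ᶜ.Finite ∧ (∀ n, fc n = f (g n)) ∧
        ∀ m, m ∉ Set.range g → ∀ n, m < g n → (∀ k < n, g k < m) → (F (f m) ↔ F (f (g n)))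
  | _, _ => False

/-- Primitives that always succeed without consulting the store:
tell primitives and graphical primitives. -/
def safePrim {I G : Type} : Prim I G → Prop
  | .tell _ => True
  | .gr _ => True
  | _ => False

/-- The sequential composition `p; p₁; ⋯; pₙ` of a nonempty list of primitives. -/
def seqComp {I G : Type} (p : Prim I G) : List (Prim I G) → Agent I G
  | [] => .prim p
  | q :: l => .seq (.prim p) (seqComp q l)

/-- The history contains a store satisfying `F` (reachability of `F`). -/
def histReach {I : Type} (F : Store I → Prop) : Hist I → Prop
  | .fin l _ => ∃ σ ∈ l, F σ
  | .inf f => ∃ n, F (f n)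

/-- A head is a primitive or a guarded list of primitives. -/
def isHead {I G : Type} : Agent I G → Prop
  | .prim _ => True
  | .glist _ _ => True
  | _ => False

/-- Agents in normal form: `N ::= p | p;A | N+N`, where `p` is a primitive
(store-related or graphical) or a guarded list and `A` is an arbitrary agent. -/
inductive NormalForm {I G : Type} : Agent I G → Prop
  | head {p : Agent I G} : isHead p → NormalForm p
  | seq {p A : Agent I G} : isHead p → NormalForm (Agent.seq p A)
  | choice {N₁ N₂ : Agent I G} : NormalForm N₁ → NormalForm N₂ →
      NormalForm (Agent.choice N₁ N₂)

/-- Left merge `⌊`: `p⌊Z = p;Z`, `(p;A)⌊Z = p;(A∥Z)`, `(N₁+N₂)⌊Z = N₁⌊Z + N₂⌊Z`. -/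
def lmerge {I G : Type} : Agent I G → Agent I G → Agent I G
  | .prim p, Z => .seq (.prim p) Z
  | .glist p l, Z => .seq (.glist p l) Z
  | .seq (.prim p) A, Z => .seq (.prim p) (.par A Z)
  | .seq (.glist p l) A, Z => .seq (.glist p l) (.par A Z)
  | .choice N₁ N₂, Z => .choice (lmerge N₁ Z) (lmerge N₂ Z)
  | N, Z => .seq N Z

/-- The normalization translation τ: `τ(p) = p`, `τ(X;Y) = τ(X);Y`,
`τ(X+Y) = τ(X)+τ(Y)`, `τ(X∥Y) = τ(X)⌊Y + τ(Y)⌊X`. -/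
def tauNF {I G : Type} : Agent I G → Agent I G
  | .prim p => .prim p
  | .glist p l => .glist p l
  | .seq X Y => .seq (tauNF X) Y
  | .choice X Y => .choice (tauNF X) (tauNF Y)
  | .par X Y => .choice (lmerge (tauNF X) Y) (lmerge (tauNF Y) X)


section Aux
variable {I G : Type}

/-- Result store of a safe primitive. -/
def primRes : Prim I G → Store I → Store I
  | .tell t, σ => t ::ₘ σ
  | _, σ => σ

theorem safe_primStep {q : Prim I G} (hq : safePrim q) (σ : Store I) :
    primStep q σ (primRes q σ) := by
  cases q <;> simp_all [safePrim, primStep, primRes]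

theorem safe_primStep_eq {q : Prim I G} (hq : safePrim q) {σ ρ : Store I}
    (h : primStep q σ ρ) : ρ = primRes q σ := by
  cases q <;> simp_all [safePrim, primStep, primRes]

/-- Result store of executing a list of safe primitives. -/
def execRes : List (Prim I G) → Store I → Store I
  | [], σ => σ
  | q :: l, σ => execRes l (primRes q σ)

theorem listExec_execRes : ∀ (l : List (Prim I G)), (∀ q ∈ l, safePrim q) →
    ∀ σ, listExec l σ (execRes l σ)
  | [], _, _ => rfl
  | q :: l, h, σ => ⟨primRes q σ, safe_primStep (h q (.head l)) σ,
      listExec_execRes l (fun r hr => h r (.tail _ hr)) _⟩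

theorem listExec_eq : ∀ {l : List (Prim I G)}, (∀ q ∈ l, safePrim q) →
    ∀ {σ φ : Store I}, listExec l σ φ → φ = execRes l σ
  | [], _, _, _, h => h
  | q :: l, hs, σ, φ, ⟨ρ, hq, hl⟩ => by
    have h1 : ρ = primRes q σ := safe_primStep_eq (hs q (.head l)) hq
    subst h1
    exact listExec_eq (fun r hr => hs r (.tail _ hr)) hl

/-- The chain of configurations executing `seqComp q l` from `σ`, all primitives safe. -/
def tailChain : Prim I G → List (Prim I G) → Store I → List (Conf I G)
  | q, [], σ => [(some (.prim q), σ), (none, primRes q σ)]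
  | q, r :: l, σ => (some (.seq (.prim q) (seqComp r l)), σ) :: tailChain r l (primRes q σ)

theorem tailChain_head? (q : Prim I G) (l : List (Prim I G)) (σ : Store I) :
    (tailChain q l σ).head? = some (some (seqComp q l), σ) := by
  cases l <;> rfl

theorem tailChain_getLast? : ∀ (q : Prim I G) (l : List (Prim I G)) (σ : Store I),
    (tailChain q l σ).getLast? = some (none, execRes l (primRes q σ))
  | q, [], σ => rfl
  | q, r :: l, σ => by
    have ih := tailChain_getLast? r l (primRes q σ)
    cases l <;> simp [tailChain, execRes] at ih ⊢ <;> exact ih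

theorem tailChain_chain' : ∀ (q : Prim I G) (l : List (Prim I G)) (σ : Store I),
    safePrim q → (∀ r ∈ l, safePrim r) → (tailChain q l σ).Chain' CStep
  | q, [], σ, hq, _ => by
    refine List.isChain_cons_cons.mpr ⟨?_, List.isChain_singleton _⟩
    exact Step.prim (safe_primStep hq σ)
  | q, r :: l, σ, hq, hl => by
    rw [tailChain]
    refine List.isChain_cons.mpr ?_
    refine ⟨?_, tailChain_chain' r l _ (hl r (.head _)) (fun s hs => hl s (.tail _ hs))⟩
    intro c hc
    rw [tailChain_head?] at hc
    cases hc
    exact Step.seqE (Step.prim (safe_primStep hq σ))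

theorem sc_stuck {p : Prim I G} {l : List (Prim I G)} {τ : Store I}
    (hp : ∀ ρ, ¬ primStep p τ ρ) :
    ∀ c, ¬ CStep ((some (seqComp p l), τ) : Conf I G) c := by
  rintro ⟨o, σ⟩ hc
  cases l with
  | nil =>
    cases hc with
    | prim h => exact hp _ h
  | cons q l' =>
    cases hc with
    | seqE h => cases h with | prim h' => exact hp _ h'
    | seqS h => cases h

theorem contraction_histReach {F : Store I → Prop} {h h' : Hist I}
    (hc : Contraction h h') (hr : histReach F h) : histReach F h' := by
  cases h with
  | fin lc bc =>
    cases h' with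
    | fin l b =>
      obtain ⟨_, hsub⟩ := hc
      obtain ⟨σ, hσ, hF⟩ := hr
      exact ⟨σ, hsub.subset hσ, hF⟩
    | inf f => exact absurd hc (by simp [Contraction])
  | inf fc =>
    cases h' with
    | fin l b => exact absurd hc (by simp [Contraction])
    | inf f =>
      obtain ⟨g, _, _, hg⟩ := hc
      obtain ⟨n, hF⟩ := hr
      exact ⟨g n, (hg n) ▸ hF⟩

end Aux

end Bach

open Bach

/-- if `p₁,…,pₙ` are tell or graphical primitives then, for any primitive
`p`, the guarded list `GL = [p → p₁,…,pₙ]` refines the sequential composition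
`SC = p; p₁; ⋯; pₙ`: for every store `τ`, every history of `Oh(GL)(τ)` is a contraction
of some history of `Oh(SC)(τ)`.  Consequently, any reachability property established on
the stores generated by executing `GL` from `τ` also holds of the stores generated by
executing `SC` from `τ`. -/
theorem glist_refines_seq (I G : Type) (p : Prim I G) (l : List (Prim I G))
    (hl : ∀ q ∈ l, safePrim q) :
    (∀ τ : Store I, ∀ h ∈ Oh (Agent.glist p l) τ,
        ∃ h' ∈ Oh (seqComp p l) τ, Contraction h h') ∧
    (∀ (F : Store I → Prop) (τ : Store I),
        (∃ h ∈ Oh (Agent.glist p l) τ, histReach F h) →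
        ∃ h' ∈ Oh (seqComp p l) τ, histReach F h') := by
  have main : ∀ τ : Store I, ∀ h ∈ Oh (Agent.glist p l) τ,
      ∃ h' ∈ Oh (seqComp p l) τ, Contraction h h' := by
    intro τ h hh
    rcases hh with hfin | hinf
    · obtain ⟨cs, hch, hhd, hcase⟩ := hfin
      cases cs with
      | nil => simp at hhd
      | cons c0 rest =>
        simp only [List.head?_cons, Option.some.injEq] at hhd
        subst hhd
        cases rest with
        | nil =>
          rcases hcase with ⟨⟨σ, hlast⟩, _⟩ | ⟨⟨B, σ, hlast, hstuck⟩, hfalse⟩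
          · simp at hlast
          · simp only [List.getLast?_singleton, Option.some.injEq, Prod.mk.injEq,
              Option.some.injEq] at hlast
            obtain ⟨hB, hσ⟩ := hlast
            subst hB; subst hσ
            have hp : ∀ ρ, ¬ primStep p τ ρ := by
              intro ρ hρ
              exact hstuck (none, execRes l ρ)
                (Step.glist hρ (listExec_execRes l hl ρ))
            refine ⟨Hist.fin [τ] false, Or.inl ⟨[((some (seqComp p l), τ) : Conf I G)],
              List.isChain_singleton _, rfl, Or.inr ⟨⟨seqComp p l, τ, rfl, sc_stuck hp⟩, rfl⟩⟩, ?_⟩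
            subst hfalse
            exact ⟨rfl, List.Sublist.refl _⟩
        | cons c1 rest' =>
          obtain ⟨o1, σ1⟩ := c1
          have hstep : Step (Agent.glist p l) τ o1 σ1 := (List.isChain_cons_cons.mp hch).1
          cases hstep with
          | glist hp hle =>
            rename_i ρ
            cases rest' with
            | cons c2 rest'' =>
              exact absurd (List.isChain_cons_cons.mp (List.isChain_cons_cons.mp hch).2).1 (by simp [CStep])
            | nil =>
              rcases hcase with ⟨_, htrue⟩ | ⟨⟨B, σ, hlast, _⟩, _⟩
              · subst htrue
                cases l with
                | nil =>
                  have hσ1 : σ1 = ρ := hle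
                  subst hσ1
                  refine ⟨Hist.fin [τ, σ1] true, Or.inl
                    ⟨[((some (Agent.prim p), τ) : Conf I G), (none, σ1)],
                      ?_, rfl, Or.inl ⟨⟨σ1, rfl⟩, rfl⟩⟩, rfl, List.Sublist.refl _⟩
                  exact List.isChain_cons_cons.mpr ⟨Step.prim hp, List.isChain_singleton _⟩
                | cons q l' =>
                  have hsq : safePrim q := hl q (.head _)
                  have hsl' : ∀ r ∈ l', safePrim r := fun r hr => hl r (.tail _ hr)
                  have hσ1 : σ1 = execRes l' (primRes q ρ) := listExec_eq hl hle
                  refine ⟨Hist.fin (τ :: (tailChain q l' ρ).map Prod.snd) true,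
                    Or.inl ⟨(some (seqComp p (q :: l')), τ) :: tailChain q l' ρ,
                      ?_, rfl, Or.inl ⟨⟨execRes l' (primRes q ρ), ?_⟩, by simp⟩⟩, rfl, ?_⟩
                  · refine List.isChain_cons.mpr
                      ⟨?_, tailChain_chain' q l' ρ hsq hsl'⟩
                    intro c hc
                    rw [tailChain_head?] at hc
                    cases hc
                    exact Step.seqE (Step.prim hp)
                  · exact Option.mem_def.mp (List.mem_getLast?_cons
                      (Option.mem_def.mpr (tailChain_getLast? q l' ρ)))
                  · refine List.Sublist.cons₂ _ (List.singleton_sublist.mpr ?_)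
                    have hm : ((none : Option (Agent I G)), σ1) ∈ tailChain q l' ρ := by
                      rw [hσ1]
                      obtain ⟨hne, heq⟩ := List.mem_getLast?_eq_getLast
                        (Option.mem_def.mpr (tailChain_getLast? q l' ρ))
                      rw [heq]
                      exact List.getLast_mem hne
                    exact List.mem_map_of_mem (f := Prod.snd) hm
              · simp at hlast
    · exfalso
      obtain ⟨f, hf0, hstep, _⟩ := hinf
      have h1 := hstep 0
      have h2 := hstep 1
      rw [hf0] at h1
      rcases e1 : f 1 with ⟨o1, σ1⟩
      rw [e1] at h1 h2
      cases h1
      exact h2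
  refine ⟨main, ?_⟩
  intro F τ ⟨h, hh, hr⟩
  obtain ⟨h', hh', hc⟩ := main τ h hh
  exact ⟨h', hh', contraction_histReach hc hr⟩
end

section
/- There is no modular embedding of gdLg(ask, tell) into rLg(ask, tell): gdLg(ask, tell) ≰ rLg(ask, tell). That is, there exist no compositional coder C from the ask/tell fragment with guarded lists into the ask/tell fragment without guarded lists and element-wise termination-preserving decoder D_el such that for every agent A of gdLg(ask, tell), Of(A) = {D_el(x) : x ∈ Of(C(A))}. -/
open Bach
namespace NoEmbedAux
open Bach

variable {I G : Type}

abbrev SAT : Set PKind := {PKind.ask, PKind.tell}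

/-- Size of an agent. -/
def asz : Agent I G → ℕ
  | .prim _ => 1
  | .glist _ _ => 1
  | .seq A B => asz A + asz B + 1
  | .par A B => asz A + asz B + 1
  | .choice A B => asz A + asz B + 1

lemma step_size {A : Agent I G} {σ o τ} (h : Step A σ o τ) :
    ∀ A', o = some A' → asz A' < asz A := by
  induction h with
  | prim _ => intro A' h; cases h
  | glist _ _ => intro A' h; cases h
  | seqE _ => intro A' h; cases h; simp [asz]
  | seqS _ ih => intro A' h; cases h; have := ih _ rfl; simp [asz]; omega
  | parLE _ => intro A' h; cases h; simp [asz]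
  | parLS _ ih => intro A' h; cases h; have := ih _ rfl; simp [asz]; omega
  | parRE _ => intro A' h; cases h; simp [asz]
  | parRS _ ih => intro A' h; cases h; have := ih _ rfl; simp [asz]; omega
  | choiceL _ ih => intro A' h; have := ih _ h; simp [asz]; omega
  | choiceR _ ih => intro A' h; have := ih _ h; simp [asz]; omega

/-- Every agent terminates: there is a maximal extension from any configuration. -/
lemma exists_max : ∀ (n : ℕ) (P : Agent I G), asz P ≤ n → ∀ σ : Store I,
    ∃ (m : Option (Agent I G)) (τ : Store I),
      Relation.ReflTransGen CStep ((some P, σ) : Conf I G) (m, τ) ∧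
      (m = none ∨ ∀ c, ¬ CStep ((m, τ) : Conf I G) c) := by
  intro n
  induction n with
  | zero => intro P h; cases P <;> simp [asz] at h
  | succ n ih =>
    intro P hP σ
    by_cases h : ∃ c, CStep ((some P, σ) : Conf I G) c
    · obtain ⟨⟨o, ρ⟩, hc⟩ := h
      have hc' : Step P σ o ρ := hc
      cases o with
      | none => exact ⟨none, ρ, Relation.ReflTransGen.single hc, Or.inl rfl⟩
      | some P' =>
        have hlt : asz P' < asz P := step_size hc' _ rfl
        obtain ⟨m, τ, h1, h2⟩ := ih P' (by omega) ρ
        exact ⟨m, τ, Relation.ReflTransGen.head hc h1, h2⟩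
    · push_neg at h
      exact ⟨some P, σ, Relation.ReflTransGen.refl, Or.inr h⟩

lemma not_nask_SAT : PKind.nask ∉ SAT := by
  intro h
  rcases h with h | h <;> exact PKind.noConfusion h

lemma not_get_SAT : PKind.get ∉ SAT := by
  intro h
  rcases h with h | h <;> exact PKind.noConfusion h

/-- Residues of steps stay glFree and in the fragment. -/
lemma step_pres {P : Agent I G} {σ o τ} (h : Step P σ o τ) :
    ∀ P', o = some P' → glFree P → agentIn SAT P → glFree P' ∧ agentIn SAT P' := by
  induction h with
  | prim _ => intro P' h; cases h
  | glist _ _ => intro P' h; cases h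
  | seqE _ => intro P' h hg hin; cases h; exact ⟨hg.2, hin.2⟩
  | seqS _ ih =>
    intro P' h hg hin; cases h
    obtain ⟨h1, h2⟩ := ih _ rfl hg.1 hin.1
    exact ⟨⟨h1, hg.2⟩, ⟨h2, hin.2⟩⟩
  | parLE _ => intro P' h hg hin; cases h; exact ⟨hg.2, hin.2⟩
  | parLS _ ih =>
    intro P' h hg hin; cases h
    obtain ⟨h1, h2⟩ := ih _ rfl hg.1 hin.1
    exact ⟨⟨h1, hg.2⟩, ⟨h2, hin.2⟩⟩
  | parRE _ => intro P' h hg hin; cases h; exact ⟨hg.1, hin.1⟩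
  | parRS _ ih =>
    intro P' h hg hin; cases h
    obtain ⟨h1, h2⟩ := ih _ rfl hg.2 hin.2
    exact ⟨⟨hg.1, h1⟩, ⟨hin.1, h2⟩⟩
  | choiceL _ ih => intro P' h hg hin; exact ih _ h hg.1 hin.1
  | choiceR _ ih => intro P' h hg hin; exact ih _ h hg.2 hin.2

/-- Steps of glFree ask/tell agents are monotone in the store. -/
lemma step_mono {P : Agent I G} {σ o τ} (δ : Store I) (h : Step P σ o τ) :
    glFree P → agentIn SAT P → Step P (σ + δ) o (τ + δ) := by
  induction h with
  | @prim p σ' τ' hp =>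
    intro _ hin
    refine Step.prim ?_
    cases p with
    | tell t =>
      simp only [primStep] at hp ⊢
      subst hp; simp [Multiset.cons_add]
    | ask t =>
      obtain ⟨h1, h2⟩ := hp; subst h2
      exact ⟨Multiset.mem_add.2 (Or.inl h1), rfl⟩
    | nask t => exact absurd hin not_nask_SAT
    | get t => exact absurd hin not_get_SAT
    | gr g =>
      simp only [primStep] at hp ⊢
      subst hp; rfl
  | glist hp hl => intro hg _; exact hg.elim
  | seqE _ ih => intro hg hin; exact Step.seqE (ih hg.1 hin.1)
  | seqS _ ih => intro hg hin; exact Step.seqS (ih hg.1 hin.1)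
  | parLE _ ih => intro hg hin; exact Step.parLE (ih hg.1 hin.1)
  | parLS _ ih => intro hg hin; exact Step.parLS (ih hg.1 hin.1)
  | parRE _ ih => intro hg hin; exact Step.parRE (ih hg.2 hin.2)
  | parRS _ ih => intro hg hin; exact Step.parRS (ih hg.2 hin.2)
  | choiceL _ ih => intro hg hin; exact Step.choiceL (ih hg.1 hin.1)
  | choiceR _ ih => intro hg hin; exact Step.choiceR (ih hg.2 hin.2)

lemma rtg_none {σ : Store I} {m : Option (Agent I G)} {τ : Store I}
    (h : Relation.ReflTransGen CStep ((none : Option (Agent I G)), σ) (m, τ)) :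
    m = none ∧ τ = σ := by
  rcases Relation.ReflTransGen.cases_head h with h | ⟨c, hc, _⟩
  · injection h with h1 h2
    exact ⟨h1.symm, h2.symm⟩
  · obtain ⟨o, ρ⟩ := c
    exact hc.elim

/-- Lifting a run through a sequential composition. -/
lemma rtg_seq {c d : Conf I G} (h : Relation.ReflTransGen CStep c d) :
    ∀ (Z P : Agent I G) (σ : Store I), c = (some P, σ) →
    ∀ (m : Option (Agent I G)) (τ : Store I), d = (m, τ) →
      Relation.ReflTransGen CStep ((some (Agent.seq P Z), σ) : Conf I G)
        ((match m with | none => some Z | some Q => some (Agent.seq Q Z)), τ) := by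
  induction h using Relation.ReflTransGen.head_induction_on with
  | refl =>
    intro Z P σ hc m τ hd
    rw [hc] at hd
    injection hd with h1 h2
    subst h2
    subst h1
    exact Relation.ReflTransGen.refl
  | @head a1 a2 ha h' ih =>
    intro Z P σ hc m τ hd
    subst hc
    obtain ⟨o, ρ⟩ := a2
    have ha' : Step P σ o ρ := ha
    cases o with
    | some P₁ =>
      have hc2 : CStep ((some (Agent.seq P Z), σ) : Conf I G)
          (some (Agent.seq P₁ Z), ρ) := Step.seqS ha'
      exact Relation.ReflTransGen.head hc2 (ih Z P₁ ρ rfl m τ hd)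
    | none =>
      have hc2 : CStep ((some (Agent.seq P Z), σ) : Conf I G) (some Z, ρ) := Step.seqE ha'
      subst hd
      obtain ⟨rfl, rfl⟩ := rtg_none h'
      exact Relation.ReflTransGen.single hc2

/-- Lifting a run monotonically by a store increment. -/
lemma rtg_mono (δ : Store I) {c d : Conf I G} (h : Relation.ReflTransGen CStep c d) :
    ∀ P σ, c = (some P, σ) → glFree P → agentIn SAT P →
    ∀ m τ, d = (m, τ) →
      Relation.ReflTransGen CStep ((some P, σ + δ) : Conf I G) (m, τ + δ) := by
  induction h using Relation.ReflTransGen.head_induction_on with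
  | refl =>
    intro P σ hc _ _ m τ hd
    rw [hc] at hd
    injection hd with h1 h2
    subst h2
    subst h1
    exact Relation.ReflTransGen.refl
  | @head a1 a2 ha h' ih =>
    intro P σ hc hg hin m τ hd
    subst hc
    obtain ⟨o, ρ⟩ := a2
    have ha' : Step P σ o ρ := ha
    have hmono : Step P (σ + δ) o (ρ + δ) := step_mono δ ha' hg hin
    cases o with
    | some P₁ =>
      obtain ⟨hg1, hin1⟩ := step_pres ha' _ rfl hg hin
      have hc2 : CStep ((some P, σ + δ) : Conf I G) (some P₁, ρ + δ) := hmono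
      exact Relation.ReflTransGen.head hc2 (ih P₁ ρ rfl hg1 hin1 m τ hd)
    | none =>
      have hc2 : CStep ((some P, σ + δ) : Conf I G) (none, ρ + δ) := hmono
      subst hd
      obtain ⟨rfl, rfl⟩ := rtg_none h'
      exact Relation.ReflTransGen.single hc2

lemma seq_step_of {A B : Agent I G} {σ o ρ} (h : Step A σ o ρ) :
    ∃ o' ρ', Step (Agent.seq A B) σ o' ρ' := by
  cases o with
  | none => exact ⟨some B, ρ, Step.seqE h⟩
  | some A' => exact ⟨some (Agent.seq A' B), ρ, Step.seqS h⟩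

lemma parL_step_of {A B : Agent I G} {σ o ρ} (h : Step A σ o ρ) :
    ∃ o' ρ', Step (Agent.par A B) σ o' ρ' := by
  cases o with
  | none => exact ⟨some B, ρ, Step.parLE h⟩
  | some A' => exact ⟨some (Agent.par A' B), ρ, Step.parLS h⟩

lemma parR_step_of {A B : Agent I G} {σ o ρ} (h : Step B σ o ρ) :
    ∃ o' ρ', Step (Agent.par A B) σ o' ρ' := by
  cases o with
  | none => exact ⟨some A, ρ, Step.parRE h⟩
  | some B' => exact ⟨some (Agent.par A B'), ρ, Step.parRS h⟩

/-- A step of a glFree ask/tell agent from a union store comes from one of the parts. -/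
lemma step_union_aux {P : Agent I G} {s : Store I} {o ρ} (h : Step P s o ρ) :
    ∀ σ τ : Store I, s = σ + τ → glFree P → agentIn SAT P →
      (∃ o' ρ', Step P σ o' ρ') ∨ (∃ o' ρ', Step P τ o' ρ') := by
  induction h with
  | @prim p s' ρ' hp =>
    intro σ τ hs hg hin
    cases p with
    | tell t => exact Or.inl ⟨none, t ::ₘ σ, Step.prim rfl⟩
    | ask t =>
      obtain ⟨h1, _⟩ := hp
      rw [hs] at h1
      rcases Multiset.mem_add.1 h1 with h | h
      · exact Or.inl ⟨none, σ, Step.prim ⟨h, rfl⟩⟩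
      · exact Or.inr ⟨none, τ, Step.prim ⟨h, rfl⟩⟩
    | gr g => exact Or.inl ⟨none, σ, Step.prim rfl⟩
    | nask t => exact absurd hin not_nask_SAT
    | get t => exact absurd hin not_get_SAT
  | glist hp hl => intro _ _ _ hg _; exact hg.elim
  | seqE _ ih | seqS _ ih =>
    intro σ τ hs hg hin
    rcases ih σ τ hs hg.1 hin.1 with ⟨o', ρ', h'⟩ | ⟨o', ρ', h'⟩
    · exact Or.inl (seq_step_of h')
    · exact Or.inr (seq_step_of h')
  | parLE _ ih | parLS _ ih =>
    intro σ τ hs hg hin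
    rcases ih σ τ hs hg.1 hin.1 with ⟨o', ρ', h'⟩ | ⟨o', ρ', h'⟩
    · exact Or.inl (parL_step_of h')
    · exact Or.inr (parL_step_of h')
  | parRE _ ih | parRS _ ih =>
    intro σ τ hs hg hin
    rcases ih σ τ hs hg.2 hin.2 with ⟨o', ρ', h'⟩ | ⟨o', ρ', h'⟩
    · exact Or.inl (parR_step_of h')
    · exact Or.inr (parR_step_of h')
  | choiceL _ ih =>
    intro σ τ hs hg hin
    rcases ih σ τ hs hg.1 hin.1 with ⟨o', ρ', h'⟩ | ⟨o', ρ', h'⟩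
    · exact Or.inl ⟨o', ρ', Step.choiceL h'⟩
    · exact Or.inr ⟨o', ρ', Step.choiceL h'⟩
  | choiceR _ ih =>
    intro σ τ hs hg hin
    rcases ih σ τ hs hg.2 hin.2 with ⟨o', ρ', h'⟩ | ⟨o', ρ', h'⟩
    · exact Or.inl ⟨o', ρ', Step.choiceR h'⟩
    · exact Or.inr ⟨o', ρ', Step.choiceR h'⟩

/-- Stuckness of glFree ask/tell agents is preserved under store union. -/
lemma stuck_union {P : Agent I G} {σ τ : Store I} (hg : glFree P) (hin : agentIn SAT P)
    (h1 : ∀ c, ¬ CStep ((some P, σ) : Conf I G) c)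
    (h2 : ∀ c, ¬ CStep ((some P, τ) : Conf I G) c) :
    ∀ c, ¬ CStep ((some P, σ + τ) : Conf I G) c := by
  rintro ⟨o, ρ⟩ hc
  have hc' : Step P (σ + τ) o ρ := hc
  rcases step_union_aux hc' σ τ rfl hg hin with ⟨o', ρ', h'⟩ | ⟨o', ρ', h'⟩
  · exact h1 (o', ρ') h'
  · exact h2 (o', ρ') h'

lemma obs_true {A : Agent I G} {σ : Store I}
    (h : Relation.ReflTransGen CStep ((some A, (0 : Store I)) : Conf I G) (none, σ)) :
    ((σ, true) : Store I × Bool) ∈ Obs A :=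
  Or.inl ⟨h, rfl⟩

lemma obs_false {A B : Agent I G} {σ : Store I}
    (h : Relation.ReflTransGen CStep ((some A, (0 : Store I)) : Conf I G) (some B, σ))
    (hs : ∀ c, ¬ CStep ((some B, σ) : Conf I G) c) :
    ((σ, false) : Store I × Bool) ∈ Obs A :=
  Or.inr ⟨⟨B, h, hs⟩, rfl⟩

lemma obs_elim {A : Agent I G} {x : Store I × Bool} (h : x ∈ Obs A) :
    (x.2 = true ∧
      Relation.ReflTransGen CStep ((some A, (0 : Store I)) : Conf I G) (none, x.1)) ∨
    (x.2 = false ∧ ∃ B,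
      Relation.ReflTransGen CStep ((some A, (0 : Store I)) : Conf I G) (some B, x.1) ∧
      ∀ c, ¬ CStep ((some B, x.1) : Conf I G) c) := by
  rcases h with ⟨h1, h2⟩ | ⟨h1, h2⟩
  · exact Or.inl ⟨h2, h1⟩
  · exact Or.inr ⟨h2, h1⟩

end NoEmbedAux
namespace NoEmbedAux
open Bach

variable {I G : Type} {a b : I}

lemma step_tell_inv {t : I} {σ : Store I} {o τ}
    (h : Step (Agent.prim (Prim.tell t) : Agent I G) σ o τ) :
    o = none ∧ τ = t ::ₘ σ := by
  cases h with
  | prim hp => exact ⟨rfl, hp⟩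

lemma step_glistAB_inv {σ : Store I} {o τ}
    (h : Step (Agent.glist (Prim.ask a) [Prim.ask b] : Agent I G) σ o τ) :
    o = none ∧ τ = σ ∧ a ∈ σ ∧ b ∈ σ := by
  cases h with
  | glist hp hl =>
    obtain ⟨ha, rfl⟩ := hp
    obtain ⟨ρ', ⟨hb, rfl⟩, hτ⟩ := hl
    exact ⟨rfl, hτ, ha, hb⟩

/-- The guarded list fires whenever both `a` and `b` are present. -/
lemma step_glistAB_of {σ : Store I} (ha : a ∈ σ) (hb : b ∈ σ) :
    Step (Agent.glist (Prim.ask a) [Prim.ask b] : Agent I G) σ none σ :=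
  Step.glist ⟨ha, rfl⟩ ⟨σ, ⟨hb, rfl⟩, rfl⟩

/-- The guarded list is disabled at `{a}` (since `b ∉ {a}`). -/
lemma glist_dis_a (hab : a ≠ b) : ∀ (o : Option (Agent I G)) (τ : Store I),
    ¬ Step (Agent.glist (Prim.ask a) [Prim.ask b] : Agent I G) (a ::ₘ 0) o τ := by
  intro o τ h
  obtain ⟨-, -, -, hb⟩ := step_glistAB_inv h
  rcases Multiset.mem_cons.1 hb with h' | h'
  · exact hab h'.symm
  · exact absurd h' (Multiset.notMem_zero b)

/-- The guarded list is disabled at `{b}` (since `a ∉ {b}`). -/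
lemma glist_dis_b (hab : a ≠ b) : ∀ (o : Option (Agent I G)) (τ : Store I),
    ¬ Step (Agent.glist (Prim.ask a) [Prim.ask b] : Agent I G) (b ::ₘ 0) o τ := by
  intro o τ h
  obtain ⟨-, -, ha, -⟩ := step_glistAB_inv h
  rcases Multiset.mem_cons.1 ha with h' | h'
  · exact hab h'
  · exact absurd h' (Multiset.notMem_zero a)

/-- Reachable configurations of `tell x; A` when `A` is disabled at `{x}`. -/
lemma inv_tellA {x : I}
    (hdis : ∀ (o : Option (Agent I G)) (τ : Store I),
      ¬ Step (Agent.glist (Prim.ask a) [Prim.ask b] : Agent I G) (x ::ₘ 0) o τ) :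
    ∀ {d : Conf I G}, Relation.ReflTransGen CStep
      ((some (Agent.seq (Agent.prim (Prim.tell x)) (Agent.glist (Prim.ask a) [Prim.ask b])),
        (0 : Store I)) : Conf I G) d →
      d = (some (Agent.seq (Agent.prim (Prim.tell x)) (Agent.glist (Prim.ask a) [Prim.ask b])),
            (0 : Store I)) ∨
      d = (some (Agent.glist (Prim.ask a) [Prim.ask b]), x ::ₘ 0) := by
  intro d h
  induction h with
  | refl => exact Or.inl rfl
  | @tail mid last h1 h2 ih =>
    obtain ⟨o, τ⟩ := last
    rcases ih with rfl | rfl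
    · have h2' : Step (Agent.seq (Agent.prim (Prim.tell x))
        (Agent.glist (Prim.ask a) [Prim.ask b])) 0 o τ := h2
      cases h2' with
      | seqE h => exact Or.inr (by rw [(step_tell_inv h).2])
      | seqS h => cases h
    · have h2' : Step (Agent.glist (Prim.ask a) [Prim.ask b]) (x ::ₘ 0) o τ := h2
      exact absurd h2' (hdis o τ)

/-- `tell x; A` (with `A` disabled at `{x}`) has only deadlock observables. -/
lemma obs_tellA_false {x : I}
    (hdis : ∀ (o : Option (Agent I G)) (τ : Store I),
      ¬ Step (Agent.glist (Prim.ask a) [Prim.ask b] : Agent I G) (x ::ₘ 0) o τ) :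
    ∀ y ∈ Obs (Agent.seq (Agent.prim (Prim.tell x))
        (Agent.glist (Prim.ask a) [Prim.ask b]) : Agent I G), y.2 = false := by
  intro y hy
  rcases obs_elim hy with ⟨h2, h1⟩ | ⟨h2, -⟩
  · rcases inv_tellA hdis h1 with h | h <;> exact absurd (congrArg Prod.fst h) (by simp)
  · exact h2

/-- Reachable configurations of `tell x; (A + tell a)` when `A` is disabled at `{x}`. -/
lemma inv_tellAX {x : I}
    (hdis : ∀ (o : Option (Agent I G)) (τ : Store I),
      ¬ Step (Agent.glist (Prim.ask a) [Prim.ask b] : Agent I G) (x ::ₘ 0) o τ) :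
    ∀ {d : Conf I G}, Relation.ReflTransGen CStep
      ((some (Agent.seq (Agent.prim (Prim.tell x))
        (Agent.choice (Agent.glist (Prim.ask a) [Prim.ask b]) (Agent.prim (Prim.tell a)))),
        (0 : Store I)) : Conf I G) d →
      d = (some (Agent.seq (Agent.prim (Prim.tell x))
            (Agent.choice (Agent.glist (Prim.ask a) [Prim.ask b]) (Agent.prim (Prim.tell a)))),
            (0 : Store I)) ∨
      d = (some (Agent.choice (Agent.glist (Prim.ask a) [Prim.ask b])
            (Agent.prim (Prim.tell a))), x ::ₘ 0) ∨
      d = (none, a ::ₘ x ::ₘ 0) := by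
  intro d h
  induction h with
  | refl => exact Or.inl rfl
  | @tail mid last h1 h2 ih =>
    obtain ⟨o, τ⟩ := last
    rcases ih with rfl | rfl | rfl
    · have h2' : Step (Agent.seq (Agent.prim (Prim.tell x))
        (Agent.choice (Agent.glist (Prim.ask a) [Prim.ask b]) (Agent.prim (Prim.tell a))))
        0 o τ := h2
      cases h2' with
      | seqE h => exact Or.inr (Or.inl (by rw [(step_tell_inv h).2]))
      | seqS h => cases h
    · have h2' : Step (Agent.choice (Agent.glist (Prim.ask a) [Prim.ask b])
        (Agent.prim (Prim.tell a))) (x ::ₘ 0) o τ := h2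
      cases h2' with
      | choiceL h => exact absurd h (hdis o τ)
      | choiceR h =>
        obtain ⟨rfl, rfl⟩ := step_tell_inv h
        exact Or.inr (Or.inr rfl)
    · exact absurd h2 (fun h => h)

/-- `tell x; (A + tell a)` (with `A` disabled at `{x}`) has only success observables. -/
lemma obs_tellAX_true {x : I}
    (hdis : ∀ (o : Option (Agent I G)) (τ : Store I),
      ¬ Step (Agent.glist (Prim.ask a) [Prim.ask b] : Agent I G) (x ::ₘ 0) o τ) :
    ∀ y ∈ Obs (Agent.seq (Agent.prim (Prim.tell x))
        (Agent.choice (Agent.glist (Prim.ask a) [Prim.ask b]) (Agent.prim (Prim.tell a)))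
        : Agent I G), y.2 = true := by
  intro y hy
  rcases obs_elim hy with ⟨h2, -⟩ | ⟨-, B, h1, hstuck⟩
  · exact h2
  · exfalso
    rcases inv_tellAX hdis h1 with h | h | h
    · rw [h] at hstuck
      exact hstuck (some (Agent.choice (Agent.glist (Prim.ask a) [Prim.ask b])
        (Agent.prim (Prim.tell a))), x ::ₘ 0) (Step.seqE (Step.prim rfl))
    · rw [h] at hstuck
      exact hstuck (none, a ::ₘ x ::ₘ 0) (Step.choiceR (Step.prim rfl))
    · exact absurd (congrArg Prod.fst h) (by simp)

/-- Reachable configurations of `tell a; (tell b; A)`. -/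
lemma inv_tellUA (_hab : a ≠ b) :
    ∀ {d : Conf I G}, Relation.ReflTransGen CStep
      ((some (Agent.seq (Agent.prim (Prim.tell a))
        (Agent.seq (Agent.prim (Prim.tell b)) (Agent.glist (Prim.ask a) [Prim.ask b]))),
        (0 : Store I)) : Conf I G) d →
      d = (some (Agent.seq (Agent.prim (Prim.tell a))
            (Agent.seq (Agent.prim (Prim.tell b)) (Agent.glist (Prim.ask a) [Prim.ask b]))),
            (0 : Store I)) ∨
      d = (some (Agent.seq (Agent.prim (Prim.tell b)) (Agent.glist (Prim.ask a) [Prim.ask b])),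
            a ::ₘ 0) ∨
      d = (some (Agent.glist (Prim.ask a) [Prim.ask b]), b ::ₘ a ::ₘ 0) ∨
      d = (none, b ::ₘ a ::ₘ 0) := by
  intro d h
  induction h with
  | refl => exact Or.inl rfl
  | @tail mid last h1 h2 ih =>
    obtain ⟨o, τ⟩ := last
    rcases ih with rfl | rfl | rfl | rfl
    · have h2' : Step (Agent.seq (Agent.prim (Prim.tell a))
        (Agent.seq (Agent.prim (Prim.tell b)) (Agent.glist (Prim.ask a) [Prim.ask b])))
        0 o τ := h2
      cases h2' with
      | seqE h => exact Or.inr (Or.inl (by rw [(step_tell_inv h).2]))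
      | seqS h => cases h
    · have h2' : Step (Agent.seq (Agent.prim (Prim.tell b))
        (Agent.glist (Prim.ask a) [Prim.ask b])) (a ::ₘ 0) o τ := h2
      cases h2' with
      | seqE h => exact Or.inr (Or.inr (Or.inl (by rw [(step_tell_inv h).2])))
      | seqS h => cases h
    · have h2' : Step (Agent.glist (Prim.ask a) [Prim.ask b]) (b ::ₘ a ::ₘ 0) o τ := h2
      obtain ⟨rfl, rfl, -, -⟩ := step_glistAB_inv h2'
      exact Or.inr (Or.inr (Or.inr rfl))
    · exact absurd h2 (fun h => h)

/-- `tell a; (tell b; A)` has only success observables. -/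
lemma obs_tellUA_true (hab : a ≠ b) :
    ∀ y ∈ Obs (Agent.seq (Agent.prim (Prim.tell a))
        (Agent.seq (Agent.prim (Prim.tell b)) (Agent.glist (Prim.ask a) [Prim.ask b]))
        : Agent I G), y.2 = true := by
  intro y hy
  rcases obs_elim hy with ⟨h2, -⟩ | ⟨-, B, h1, hstuck⟩
  · exact h2
  · exfalso
    rcases inv_tellUA hab h1 with h | h | h | h
    · rw [h] at hstuck
      exact hstuck (some (Agent.seq (Agent.prim (Prim.tell b))
        (Agent.glist (Prim.ask a) [Prim.ask b])), a ::ₘ 0) (Step.seqE (Step.prim rfl))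
    · rw [h] at hstuck
      exact hstuck (some (Agent.glist (Prim.ask a) [Prim.ask b]), b ::ₘ a ::ₘ 0)
        (Step.seqE (Step.prim rfl))
    · rw [h] at hstuck
      exact hstuck (none, b ::ₘ a ::ₘ 0)
        (step_glistAB_of (Multiset.mem_cons_of_mem (Multiset.mem_cons_self a 0))
          (Multiset.mem_cons_self b (a ::ₘ 0)))
    · exact absurd (congrArg Prod.fst h) (by simp)

end NoEmbedAux
namespace NoEmbedAux
open Bach

variable {I G : Type}

/-- Key lemma: if `c;g` can never succeed and `c;(g+c)` can never deadlock, then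
`g` is stuck at any final store `σ₁` of `c`. -/
lemma g_stuck_at {g c c' : Agent I G} {σ₁ : Store I}
    (hrun : Relation.ReflTransGen CStep ((some c, (0 : Store I)) : Conf I G) (none, σ₁))
    (hnosucc : ∀ σ : Store I, ¬ Relation.ReflTransGen CStep
        ((some (Agent.seq c g), (0 : Store I)) : Conf I G) (none, σ))
    (hnodead : ∀ (ρ : Store I) (B : Agent I G), Relation.ReflTransGen CStep
        ((some (Agent.seq c (Agent.choice g c')), (0 : Store I)) : Conf I G) (some B, ρ) →
        ∃ d, CStep ((some B, ρ) : Conf I G) d) :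
    ∀ d, ¬ CStep ((some g, σ₁) : Conf I G) d := by
  rintro ⟨o, ρ⟩ hstep
  have hstep' : Step g σ₁ o ρ := hstep
  have lift1 : Relation.ReflTransGen CStep ((some (Agent.seq c g), (0 : Store I)) : Conf I G)
      (some g, σ₁) := rtg_seq hrun g c 0 rfl none σ₁ rfl
  cases o with
  | none =>
    have hc2 : CStep ((some g, σ₁) : Conf I G) (none, ρ) := hstep'
    exact hnosucc ρ (lift1.trans (Relation.ReflTransGen.single hc2))
  | some g₁ =>
    have hc2 : CStep ((some g, σ₁) : Conf I G) (some g₁, ρ) := hstep'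
    obtain ⟨m, τ, hext, hmax⟩ := exists_max (asz g₁) g₁ le_rfl ρ
    cases m with
    | none =>
      exact hnosucc τ (lift1.trans (Relation.ReflTransGen.head hc2 hext))
    | some B =>
      rcases hmax with hm | hstuck
      · cases hm
      · have lift2 : Relation.ReflTransGen CStep
            ((some (Agent.seq c (Agent.choice g c')), (0 : Store I)) : Conf I G)
            (some (Agent.choice g c'), σ₁) :=
          rtg_seq hrun (Agent.choice g c') c 0 rfl none σ₁ rfl
        have hch : CStep ((some (Agent.choice g c'), σ₁) : Conf I G) (some g₁, ρ) :=
          Step.choiceL hstep'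
        obtain ⟨d, hd⟩ := hnodead τ B (lift2.trans (Relation.ReflTransGen.head hch hext))
        exact hstuck d hd

end NoEmbedAux
open NoEmbedAux

/-- there is no modular embedding of `gdLg(ask, tell)` into
`rLg(ask, tell)` (assuming at least two distinct si-terms). -/
theorem no_modEmbed_ask_tell (I G : Type) (a b : I) (hab : a ≠ b) :
    ¬ ModEmbed (gdLg ({PKind.ask, PKind.tell} : Set PKind) : Set (Agent I G))
        (rLg ({PKind.ask, PKind.tell} : Set PKind)) := by
  rintro ⟨C, D, hmap, hseq, hpar, hcho, hD, hobs⟩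
  -- the agents
  set A0 : Agent I G := Agent.glist (Prim.ask a) [Prim.ask b] with hA0def
  set tA : Agent I G := Agent.prim (Prim.tell a) with htAdef
  set uA : Agent I G := Agent.prim (Prim.tell b) with huAdef
  have haskS : PKind.ask ∈ SAT := Or.inl rfl
  have htellS : PKind.tell ∈ SAT := Or.inr rfl
  have mA : A0 ∈ gdLg SAT := by
    show agentIn SAT A0
    refine ⟨haskS, ?_⟩
    intro q hq
    rcases List.mem_singleton.1 hq with rfl
    exact haskS
  have mt : tA ∈ gdLg SAT := htellS
  have mu : uA ∈ gdLg SAT := htellS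
  have mX : Agent.choice A0 tA ∈ gdLg SAT := ⟨mA, mt⟩
  have muA0 : Agent.seq uA A0 ∈ gdLg SAT := ⟨mu, mA⟩
  have mtA0 : Agent.seq tA A0 ∈ gdLg SAT := ⟨mt, mA⟩
  have mtX : Agent.seq tA (Agent.choice A0 tA) ∈ gdLg SAT := ⟨mt, mX⟩
  have muX : Agent.seq uA (Agent.choice A0 tA) ∈ gdLg SAT := ⟨mu, mX⟩
  have mtuA : Agent.seq tA (Agent.seq uA A0) ∈ gdLg SAT := ⟨mt, muA0⟩
  -- coded agents
  set g : Agent I G := C A0 with hgdef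
  set c : Agent I G := C tA with hcdef
  set e : Agent I G := C uA with hedef
  have hg2 := hmap A0 mA
  have he2 := hmap uA mu
  simp only [rLg, Set.mem_setOf_eq] at hg2 he2
  obtain ⟨hin_g, hfree_g⟩ := hg2
  obtain ⟨hin_e, hfree_e⟩ := he2
  -- success runs of c and e
  have getrun : ∀ (x : I) (P : Agent I G), P ∈ gdLg SAT →
      ((x ::ₘ (0 : Store I), true) : Store I × Bool) ∈ Obs P →
      ∃ σ : Store I, Relation.ReflTransGen CStep ((some (C P), (0 : Store I)) : Conf I G)
        (none, σ) := by
    intro x P hP hObs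
    rw [hobs P hP] at hObs
    obtain ⟨y, hyObs, hyD⟩ := hObs
    have hy2 : y.2 = true := by rw [← hD y, hyD]
    rcases obs_elim hyObs with ⟨-, h1⟩ | ⟨h2, -⟩
    · exact ⟨y.1, h1⟩
    · rw [h2] at hy2; cases hy2
  obtain ⟨σ₁, hc_run⟩ := getrun a tA mt
    (obs_true (Relation.ReflTransGen.single (Step.prim rfl)))
  obtain ⟨σ₂, he_run⟩ := getrun b uA mu
    (obs_true (Relation.ReflTransGen.single (Step.prim rfl)))
  -- coded (tell x); g can never succeed
  have no_succ : ∀ (P : Agent I G), P ∈ gdLg SAT →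
      (∀ y ∈ Obs (Agent.seq P A0), (y : Store I × Bool).2 = false) →
      ∀ σ : Store I, ¬ Relation.ReflTransGen CStep
        ((some (Agent.seq (C P) g), (0 : Store I)) : Conf I G) (none, σ) := by
    intro P hP hfalse σ hr
    have h1 : ((σ, true) : Store I × Bool) ∈ Obs (Agent.seq (C P) g) := obs_true hr
    rw [← hseq P A0 hP mA] at h1
    have h2 : D (σ, true) ∈ Obs (Agent.seq P A0) := by
      rw [hobs (Agent.seq P A0) ⟨hP, mA⟩]
      exact Set.mem_image_of_mem D h1
    have := hfalse _ h2
    rw [hD (σ, true)] at this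
    cases this
  -- coded (tell x); (g + c) can never deadlock
  have no_dead : ∀ (P : Agent I G), P ∈ gdLg SAT →
      (∀ y ∈ Obs (Agent.seq P (Agent.choice A0 tA)), (y : Store I × Bool).2 = true) →
      ∀ (ρ : Store I) (B : Agent I G), Relation.ReflTransGen CStep
        ((some (Agent.seq (C P) (Agent.choice g c)), (0 : Store I)) : Conf I G) (some B, ρ) →
        ∃ d, CStep ((some B, ρ) : Conf I G) d := by
    intro P hP htrue ρ B hr
    by_contra hnone
    push_neg at hnone
    have h1 : ((ρ, false) : Store I × Bool) ∈ Obs (Agent.seq (C P) (Agent.choice g c)) :=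
      obs_false hr hnone
    rw [← hcho A0 tA mA mt, ← hseq P (Agent.choice A0 tA) hP mX] at h1
    have h2 : D (ρ, false) ∈ Obs (Agent.seq P (Agent.choice A0 tA)) := by
      rw [hobs (Agent.seq P (Agent.choice A0 tA)) ⟨hP, mX⟩]
      exact Set.mem_image_of_mem D h1
    have := htrue _ h2
    rw [hD (ρ, false)] at this
    cases this
  -- g is stuck at σ₁ and at σ₂
  have hstuck1 : ∀ d, ¬ CStep ((some g, σ₁) : Conf I G) d :=
    g_stuck_at hc_run (no_succ tA mt (obs_tellA_false (glist_dis_a hab)))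
      (no_dead tA mt (obs_tellAX_true (glist_dis_a hab)))
  have hstuck2 : ∀ d, ¬ CStep ((some g, σ₂) : Conf I G) d :=
    g_stuck_at he_run (no_succ uA mu (obs_tellA_false (glist_dis_b hab)))
      (no_dead uA mu (obs_tellAX_true (glist_dis_b hab)))
  -- reach the stuck configuration (g, σ₂ + σ₁) inside c;(e;g)
  have l2 : Relation.ReflTransGen CStep ((some e, σ₁) : Conf I G) (none, σ₂ + σ₁) := by
    have := rtg_mono σ₁ he_run e 0 rfl hfree_e hin_e none σ₂ rfl
    rwa [zero_add] at this
  have hfin : Relation.ReflTransGen CStep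
      ((some (Agent.seq c (Agent.seq e g)), (0 : Store I)) : Conf I G) (some g, σ₂ + σ₁) :=
    (rtg_seq hc_run (Agent.seq e g) c 0 rfl none σ₁ rfl).trans
      (rtg_seq l2 g e σ₁ rfl none (σ₂ + σ₁) rfl)
  have hstuck12 : ∀ d, ¬ CStep ((some g, σ₂ + σ₁) : Conf I G) d :=
    stuck_union hfree_g hin_g hstuck2 hstuck1
  -- contradiction with Obs(tell a; (tell b; A)) being all-success
  have h1 : ((σ₂ + σ₁, false) : Store I × Bool) ∈ Obs (Agent.seq c (Agent.seq e g)) :=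
    obs_false hfin hstuck12
  rw [← hseq uA A0 mu mA, ← hseq tA (Agent.seq uA A0) mt muA0] at h1
  have h2 : D (σ₂ + σ₁, false) ∈ Obs (Agent.seq tA (Agent.seq uA A0)) := by
    rw [hobs _ mtuA]
    exact Set.mem_image_of_mem D h1
  have := obs_tellUA_true hab _ h2
  rw [hD (σ₂ + σ₁, false)] at this
  cases this
end

section
/- There is no modular embedding of gdLg(ask, get, tell) into rLg(ask, get, tell): gdLg(ask, get, tell) ≰ rLg(ask, get, tell). That is, there exist no compositional coder C from the ask/get/tell fragment with guarded lists into the ask/get/tell fragment without guarded lists and element-wise termination-preserving decoder D_el such that for every agent A of gdLg(ask, get, tell), Of(A) = {D_el(x) : x ∈ Of(C(A))}. -/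
open Bach

namespace BachAux

open Bach

variable {I G : Type}

/-! ### Generic lemmas about the operational semantics -/

/-- Size of an agent, strictly decreasing along transitions. -/
def asize : Agent I G → ℕ
  | .prim _ => 1
  | .glist _ _ => 1
  | .seq A B => asize A + asize B + 1
  | .par A B => asize A + asize B + 1
  | .choice A B => asize A + asize B + 1

lemma step_asize {A : Agent I G} {σ : Store I} {o} {τ : Store I} (h : Step A σ o τ) :
    ∀ A', o = some A' → asize A' < asize A := by
  induction h with
  | prim _ => exact fun A' h => nomatch h
  | glist _ _ => exact fun A' h => nomatch h
  | seqE _ => intro A' h; injection h with h; subst h; simp only [asize]; omega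
  | seqS _ ih =>
    intro A' h; injection h with h; subst h
    have := ih _ rfl; simp only [asize]; omega
  | parLE _ => intro A' h; injection h with h; subst h; simp only [asize]; omega
  | parLS _ ih =>
    intro A' h; injection h with h; subst h
    have := ih _ rfl; simp only [asize]; omega
  | parRE _ => intro A' h; injection h with h; subst h; simp only [asize]; omega
  | parRS _ ih =>
    intro A' h; injection h with h; subst h
    have := ih _ rfl; simp only [asize]; omega
  | choiceL _ ih => intro A' h; have := ih _ h; simp only [asize]; omega
  | choiceR _ ih => intro A' h; have := ih _ h; simp only [asize]; omega

/-- Size of a configuration. -/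
def csize : Conf I G → ℕ
  | (some A, _) => asize A + 1
  | (none, _) => 0

lemma cstep_csize {c d : Conf I G} (h : CStep c d) : csize d < csize c := by
  obtain ⟨o₁, σ⟩ := c
  obtain ⟨o₂, τ⟩ := d
  cases o₁ with
  | none => exact (h : False).elim
  | some A =>
    have h' : Step A σ o₂ τ := h
    cases o₂ with
    | none => simp [csize]
    | some A' => have := step_asize h' A' rfl; simp only [csize]; omega

/-- Every configuration reaches a configuration with no successor. -/
lemma exists_maximal (c : Conf I G) :
    ∃ c', Relation.ReflTransGen CStep c c' ∧ ∀ d, ¬ CStep c' d := by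
  by_cases h : ∃ d, CStep c d
  · obtain ⟨d, hd⟩ := h
    have hlt := cstep_csize hd
    obtain ⟨c', h1, h2⟩ := exists_maximal d
    exact ⟨c', Relation.ReflTransGen.head hd h1, h2⟩
  · exact ⟨c, Relation.ReflTransGen.refl, fun d hd => h ⟨d, hd⟩⟩
termination_by csize c
decreasing_by exact hlt

/-- Lifting a configuration to one running inside `·; B`. -/
def seqConf (B : Agent I G) (c : Conf I G) : Conf I G :=
  (some (c.1.elim B (fun A => A.seq B)), c.2)

/-- Lifting a computation of `A` to one of `A;B`. -/
lemma rtg_seq {A : Agent I G} (B : Agent I G) {σ : Store I} {c : Conf I G}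
    (h : Relation.ReflTransGen CStep ((some A, σ) : Conf I G) c) :
    Relation.ReflTransGen CStep ((some (A.seq B), σ) : Conf I G) (seqConf B c) := by
  induction h with
  | refl => exact Relation.ReflTransGen.refl
  | tail h1 h2 ih =>
    rename_i x y
    obtain ⟨ox, τx⟩ := x
    cases ox with
    | none => exact ((h2 : False).elim)
    | some A'' =>
      obtain ⟨oy, τy⟩ := y
      have hs : Step A'' τx oy τy := h2
      cases oy with
      | none =>
        exact Relation.ReflTransGen.tail ih
          (show CStep (seqConf B ((some A'', τx) : Conf I G))
            (seqConf B ((none, τy) : Conf I G)) from Step.seqE hs)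
      | some A3 =>
        exact Relation.ReflTransGen.tail ih
          (show CStep (seqConf B ((some A'', τx) : Conf I G))
            (seqConf B ((some A3, τy) : Conf I G)) from Step.seqS hs)

/-- Transitions preserve guarded-list-freeness and the primitive kinds used. -/
lemma step_pres {X : Set PKind} {A : Agent I G} {σ : Store I} {o} {τ : Store I}
    (h : Step A σ o τ) :
    ∀ A', o = some A' → glFree A → agentIn X A → glFree A' ∧ agentIn X A' := by
  induction h with
  | prim _ => exact fun A' h => nomatch h
  | glist _ _ => exact fun A' h => nomatch h
  | seqE _ =>
    intro A' h hg hn; injection h with h; subst h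
    have hg' : _ ∧ _ := hg; have hn' : _ ∧ _ := hn
    exact ⟨hg'.2, hn'.2⟩
  | seqS _ ih =>
    intro A' h hg hn; injection h with h; subst h
    have hg' : _ ∧ _ := hg; have hn' : _ ∧ _ := hn
    obtain ⟨p1, p2⟩ := ih _ rfl hg'.1 hn'.1
    exact ⟨⟨p1, hg'.2⟩, ⟨p2, hn'.2⟩⟩
  | parLE _ =>
    intro A' h hg hn; injection h with h; subst h
    have hg' : _ ∧ _ := hg; have hn' : _ ∧ _ := hn
    exact ⟨hg'.2, hn'.2⟩
  | parLS _ ih =>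
    intro A' h hg hn; injection h with h; subst h
    have hg' : _ ∧ _ := hg; have hn' : _ ∧ _ := hn
    obtain ⟨p1, p2⟩ := ih _ rfl hg'.1 hn'.1
    exact ⟨⟨p1, hg'.2⟩, ⟨p2, hn'.2⟩⟩
  | parRE _ =>
    intro A' h hg hn; injection h with h; subst h
    have hg' : _ ∧ _ := hg; have hn' : _ ∧ _ := hn
    exact ⟨hg'.1, hn'.1⟩
  | parRS _ ih =>
    intro A' h hg hn; injection h with h; subst h
    have hg' : _ ∧ _ := hg; have hn' : _ ∧ _ := hn
    obtain ⟨p1, p2⟩ := ih _ rfl hg'.2 hn'.2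
    exact ⟨⟨hg'.1, p1⟩, ⟨hn'.1, p2⟩⟩
  | choiceL _ ih =>
    intro A' h hg hn
    have hg' : _ ∧ _ := hg; have hn' : _ ∧ _ := hn
    exact ih _ h hg'.1 hn'.1
  | choiceR _ ih =>
    intro A' h hg hn
    have hg' : _ ∧ _ := hg; have hn' : _ ∧ _ := hn
    exact ih _ h hg'.2 hn'.2

/-- Monotonicity: for nask-free guarded-list-free agents, transitions are
preserved when the store is enlarged. -/
lemma step_mono {X : Set PKind} (hX : PKind.nask ∉ X) (ρ : Store I)
    {A : Agent I G} {σ : Store I} {o} {τ : Store I} (h : Step A σ o τ) :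
    glFree A → agentIn X A → Step A (σ + ρ) o (τ + ρ) := by
  induction h with
  | @prim p σ' τ' hp =>
    intro _ hn
    refine Step.prim ?_
    cases p with
    | tell t =>
      show τ' + ρ = t ::ₘ (σ' + ρ)
      rw [show τ' = t ::ₘ σ' from hp]; exact Multiset.cons_add t σ' ρ
    | ask t =>
      have hp' : t ∈ σ' ∧ τ' = σ' := hp
      exact ⟨Multiset.mem_add.mpr (Or.inl hp'.1), by rw [hp'.2]⟩
    | nask t =>
      have : PKind.nask ∈ X := hn
      exact absurd this hX
    | get t =>
      show σ' + ρ = t ::ₘ (τ' + ρ)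
      rw [show σ' = t ::ₘ τ' from hp]; exact Multiset.cons_add t τ' ρ
    | gr g =>
      show τ' + ρ = σ' + ρ
      rw [show τ' = σ' from hp]
  | glist _ _ => intro hg _; exact (hg : False).elim
  | seqE _ ih =>
    intro hg hn
    have hg' : _ ∧ _ := hg; have hn' : _ ∧ _ := hn
    exact Step.seqE (ih hg'.1 hn'.1)
  | seqS _ ih =>
    intro hg hn
    have hg' : _ ∧ _ := hg; have hn' : _ ∧ _ := hn
    exact Step.seqS (ih hg'.1 hn'.1)
  | parLE _ ih =>
    intro hg hn
    have hg' : _ ∧ _ := hg; have hn' : _ ∧ _ := hn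
    exact Step.parLE (ih hg'.1 hn'.1)
  | parLS _ ih =>
    intro hg hn
    have hg' : _ ∧ _ := hg; have hn' : _ ∧ _ := hn
    exact Step.parLS (ih hg'.1 hn'.1)
  | parRE _ ih =>
    intro hg hn
    have hg' : _ ∧ _ := hg; have hn' : _ ∧ _ := hn
    exact Step.parRE (ih hg'.2 hn'.2)
  | parRS _ ih =>
    intro hg hn
    have hg' : _ ∧ _ := hg; have hn' : _ ∧ _ := hn
    exact Step.parRS (ih hg'.2 hn'.2)
  | choiceL _ ih =>
    intro hg hn
    have hg' : _ ∧ _ := hg; have hn' : _ ∧ _ := hn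
    exact Step.choiceL (ih hg'.1 hn'.1)
  | choiceR _ ih =>
    intro hg hn
    have hg' : _ ∧ _ := hg; have hn' : _ ∧ _ := hn
    exact Step.choiceR (ih hg'.2 hn'.2)

/-- Monotonicity for computations. -/
lemma rtg_mono {X : Set PKind} (hX : PKind.nask ∉ X) (ρ : Store I)
    {A : Agent I G} {σ : Store I} (hg : glFree A) (hn : agentIn X A)
    {c : Conf I G} (h : Relation.ReflTransGen CStep ((some A, σ) : Conf I G) c) :
    Relation.ReflTransGen CStep ((some A, σ + ρ) : Conf I G) ((c.1, c.2 + ρ) : Conf I G) ∧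
      (∀ B, c.1 = some B → glFree B ∧ agentIn X B) := by
  induction h with
  | refl =>
    exact ⟨Relation.ReflTransGen.refl, fun B hB => by
      injection hB with hB; subst hB; exact ⟨hg, hn⟩⟩
  | tail h1 h2 ih =>
    rename_i x y
    obtain ⟨hrt, hpred⟩ := ih
    obtain ⟨ox, τx⟩ := x
    cases ox with
    | none => exact ((h2 : False).elim)
    | some B =>
      obtain ⟨hgB, hnB⟩ := hpred B rfl
      obtain ⟨oy, τy⟩ := y
      have hstep : Step B τx oy τy := h2
      have hstep' := step_mono hX ρ hstep hgB hnB
      refine ⟨Relation.ReflTransGen.tail hrt hstep', fun B' hB' => ?_⟩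
      exact step_pres hstep B' hB' hgB hnB

/-- Enabledness of nask-free, guarded-list-free agents only depends on the
support of the store. -/
lemma step_enabled {X : Set PKind} (hX : PKind.nask ∉ X)
    {A : Agent I G} {σ : Store I} {o} {τ : Store I} (h : Step A σ o τ) :
    glFree A → agentIn X A → ∀ σ' : Store I, (∀ t, t ∈ σ → t ∈ σ') →
      ∃ o' τ', Step A σ' o' τ' := by
  induction h with
  | @prim p σ₀ τ₀ hp =>
    intro _ hn σ' hsub
    cases p with
    | tell t => exact ⟨none, t ::ₘ σ', Step.prim rfl⟩
    | ask t =>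
      have hp' : t ∈ σ₀ ∧ τ₀ = σ₀ := hp
      exact ⟨none, σ', Step.prim ⟨hsub t hp'.1, rfl⟩⟩
    | nask t =>
      have : PKind.nask ∈ X := hn
      exact absurd this hX
    | get t =>
      have hp' : σ₀ = t ::ₘ τ₀ := hp
      have ht : t ∈ σ' := hsub t (by rw [hp']; exact Multiset.mem_cons_self t τ₀)
      obtain ⟨τ', hτ'⟩ := Multiset.exists_cons_of_mem ht
      exact ⟨none, τ', Step.prim hτ'⟩
    | gr g => exact ⟨none, σ', Step.prim rfl⟩
  | glist _ _ => intro hg; exact ((hg : False).elim)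
  | seqE _ ih =>
    intro hg hn σ' hsub
    have hg' : _ ∧ _ := hg; have hn' : _ ∧ _ := hn
    obtain ⟨o', τ', s⟩ := ih hg'.1 hn'.1 σ' hsub
    cases o' with
    | none => exact ⟨_, _, Step.seqE s⟩
    | some A'' => exact ⟨_, _, Step.seqS s⟩
  | seqS _ ih =>
    intro hg hn σ' hsub
    have hg' : _ ∧ _ := hg; have hn' : _ ∧ _ := hn
    obtain ⟨o', τ', s⟩ := ih hg'.1 hn'.1 σ' hsub
    cases o' with
    | none => exact ⟨_, _, Step.seqE s⟩
    | some A'' => exact ⟨_, _, Step.seqS s⟩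
  | parLE _ ih =>
    intro hg hn σ' hsub
    have hg' : _ ∧ _ := hg; have hn' : _ ∧ _ := hn
    obtain ⟨o', τ', s⟩ := ih hg'.1 hn'.1 σ' hsub
    cases o' with
    | none => exact ⟨_, _, Step.parLE s⟩
    | some A'' => exact ⟨_, _, Step.parLS s⟩
  | parLS _ ih =>
    intro hg hn σ' hsub
    have hg' : _ ∧ _ := hg; have hn' : _ ∧ _ := hn
    obtain ⟨o', τ', s⟩ := ih hg'.1 hn'.1 σ' hsub
    cases o' with
    | none => exact ⟨_, _, Step.parLE s⟩
    | some A'' => exact ⟨_, _, Step.parLS s⟩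
  | parRE _ ih =>
    intro hg hn σ' hsub
    have hg' : _ ∧ _ := hg; have hn' : _ ∧ _ := hn
    obtain ⟨o', τ', s⟩ := ih hg'.2 hn'.2 σ' hsub
    cases o' with
    | none => exact ⟨_, _, Step.parRE s⟩
    | some A'' => exact ⟨_, _, Step.parRS s⟩
  | parRS _ ih =>
    intro hg hn σ' hsub
    have hg' : _ ∧ _ := hg; have hn' : _ ∧ _ := hn
    obtain ⟨o', τ', s⟩ := ih hg'.2 hn'.2 σ' hsub
    cases o' with
    | none => exact ⟨_, _, Step.parRE s⟩
    | some A'' => exact ⟨_, _, Step.parRS s⟩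
  | choiceL _ ih =>
    intro hg hn σ' hsub
    have hg' : _ ∧ _ := hg; have hn' : _ ∧ _ := hn
    obtain ⟨o', τ', s⟩ := ih hg'.1 hn'.1 σ' hsub
    exact ⟨_, _, Step.choiceL s⟩
  | choiceR _ ih =>
    intro hg hn σ' hsub
    have hg' : _ ∧ _ := hg; have hn' : _ ∧ _ := hn
    obtain ⟨o', τ', s⟩ := ih hg'.2 hn'.2 σ' hsub
    exact ⟨_, _, Step.choiceR s⟩

/-- Invariants of reachability. -/
lemma rtg_inv {P : Conf I G → Prop} (hcl : ∀ c d, P c → CStep c d → P d) :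
    ∀ {c₀ c : Conf I G}, Relation.ReflTransGen CStep c₀ c → P c₀ → P c := by
  intro c₀ c h
  induction h with
  | refl => exact id
  | tail _ h2 ih => exact fun h0 => hcl _ _ (ih h0) h2

/-! ### Observables: intro and elim forms -/

lemma obs_intro_true {A : Agent I G} {s : Store I}
    (h : Relation.ReflTransGen CStep ((some A, (0 : Store I)) : Conf I G)
      ((none, s) : Conf I G)) : (s, true) ∈ Obs A :=
  Or.inl ⟨h, rfl⟩

lemma obs_intro_false {A B : Agent I G} {s : Store I}
    (h : Relation.ReflTransGen CStep ((some A, (0 : Store I)) : Conf I G)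
      ((some B, s) : Conf I G))
    (hst : ∀ c, ¬ CStep ((some B, s) : Conf I G) c) : (s, false) ∈ Obs A :=
  Or.inr ⟨⟨B, h, hst⟩, rfl⟩

lemma obs_cases {A : Agent I G} {s : Store I} {m : Bool} (h : (s, m) ∈ Obs A) :
    (Relation.ReflTransGen CStep ((some A, (0 : Store I)) : Conf I G)
        ((none, s) : Conf I G) ∧ m = true) ∨
    ((∃ B, Relation.ReflTransGen CStep ((some A, (0 : Store I)) : Conf I G)
        ((some B, s) : Conf I G) ∧
        ∀ c, ¬ CStep ((some B, s) : Conf I G) c) ∧ m = false) := h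

/-! ### The two witness agents and their small-step analysis -/

/-- `tell t`. -/
def TA (t : I) : Agent I G := Agent.prim (Prim.tell t)

/-- The guarded list `[get t → get t]`. -/
def LA (t : I) : Agent I G := Agent.glist (Prim.get t) [Prim.get t]

lemma step_tell (t : I) (σ : Store I) :
    Step (TA t : Agent I G) σ none (t ::ₘ σ) := Step.prim rfl

lemma tell_inv {t : I} {σ : Store I} {o} {τ : Store I}
    (h : Step (TA t : Agent I G) σ o τ) : o = none ∧ τ = t ::ₘ σ := by
  cases h with
  | prim hp => exact ⟨rfl, hp⟩

lemma la_inv_one {t : I} {o} {τ : Store I}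
    (h : Step (LA t : Agent I G) (t ::ₘ 0) o τ) : False := by
  cases h with
  | glist hp hl =>
    rename_i ρ
    have hρ : ρ = 0 :=
      ((Multiset.cons_inj_right t).mp (show (t ::ₘ 0 : Store I) = t ::ₘ ρ from hp)).symm
    subst hρ
    have hl' : ∃ ρ', primStep (Prim.get t : Prim I G) (0 : Store I) ρ' ∧
        listExec ([] : List (Prim I G)) ρ' τ := hl
    obtain ⟨ρ', hp', -⟩ := hl'
    exact Multiset.cons_ne_zero (show (0 : Multiset I) = t ::ₘ ρ' from hp').symm

lemma la_step_two (t : I) :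
    Step (LA t : Agent I G) (t ::ₘ t ::ₘ 0) none 0 :=
  Step.glist (show (t ::ₘ t ::ₘ 0 : Store I) = t ::ₘ (t ::ₘ 0) from rfl)
    ⟨0, show (t ::ₘ 0 : Store I) = t ::ₘ 0 from rfl, rfl⟩

lemma glist_inv_o {p : Prim I G} {l σ o τ} (h : Step (Agent.glist p l) σ o τ) :
    o = none := by
  cases h with
  | glist _ _ => rfl

lemma seq_tell_inv {t : I} {B : Agent I G} {σ : Store I} {o} {τ : Store I}
    (h : Step ((TA t).seq B : Agent I G) σ o τ) : o = some B ∧ τ = t ::ₘ σ := by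
  cases h with
  | seqE h' => exact ⟨rfl, (tell_inv h').2⟩
  | seqS h' => cases h'

lemma choice_inv {t : I} {o} {τ : Store I}
    (h : Step ((LA t).choice (TA t) : Agent I G) (t ::ₘ 0) o τ) : o = none := by
  cases h with
  | choiceL h' => exact (la_inv_one h').elim
  | choiceR h' => exact (tell_inv h').1

/-! ### Computation of the relevant gdLg observables -/

/-- `tell t ; [get t → get t]` never succeeds. -/
lemma F2 {t : I} {s : Store I}
    (h : (s, true) ∈ Obs ((TA t).seq (LA t) : Agent I G)) : False := by
  rcases obs_cases h with ⟨hrt, -⟩ | ⟨-, hm⟩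
  · have hP := rtg_inv (P := fun c =>
        c = ((some ((TA t).seq (LA t)), (0 : Store I)) : Conf I G) ∨
        c = ((some (LA t), t ::ₘ 0) : Conf I G)) ?_ hrt (Or.inl rfl)
    · rcases hP with h | h <;> simp at h
    · intro c d hc hstep
      rcases hc with rfl | rfl
      · obtain ⟨od, τd⟩ := d
        obtain ⟨h1, h2⟩ := seq_tell_inv (show Step _ (0 : Store I) od τd from hstep)
        subst h1; subst h2
        exact Or.inr rfl
      · obtain ⟨od, τd⟩ := d
        exact (la_inv_one (show Step _ _ od τd from hstep)).elim
  · simp at hm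

/-- `tell t ; ([get t → get t] + tell t)` never deadlocks. -/
lemma F3 {t : I} {s : Store I}
    (h : (s, false) ∈ Obs ((TA t).seq ((LA t).choice (TA t)) : Agent I G)) : False := by
  rcases obs_cases h with ⟨-, hm⟩ | ⟨⟨B, hrt, hstuck⟩, -⟩
  · simp at hm
  · have hP := rtg_inv (P := fun c =>
        c = ((some ((TA t).seq ((LA t).choice (TA t))), (0 : Store I)) : Conf I G) ∨
        c = ((some ((LA t).choice (TA t)), t ::ₘ 0) : Conf I G) ∨ c.1 = none)
        ?_ hrt (Or.inl rfl)
    · rcases hP with h | h | h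
      · rw [h] at hstuck
        exact hstuck _ (show CStep _ ((some ((LA t).choice (TA t)), t ::ₘ 0) : Conf I G)
          from Step.seqE (step_tell t 0))
      · rw [h] at hstuck
        exact hstuck _ (show CStep _ ((none, t ::ₘ t ::ₘ 0) : Conf I G)
          from Step.choiceR (step_tell t _))
      · simp at h
    · intro c d hc hstep
      rcases hc with rfl | rfl | hnone
      · obtain ⟨od, τd⟩ := d
        obtain ⟨h1, h2⟩ := seq_tell_inv (show Step _ (0 : Store I) od τd from hstep)
        subst h1; subst h2
        exact Or.inr (Or.inl rfl)
      · obtain ⟨od, τd⟩ := d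
        have h1 := choice_inv (show Step _ _ od τd from hstep)
        subst h1
        exact Or.inr (Or.inr rfl)
      · obtain ⟨oc, σc⟩ := c
        cases oc with
        | none => exact ((hstep : False).elim)
        | some _ => simp at hnone

/-- `tell t ; (tell t ; [get t → get t])` never deadlocks. -/
lemma F4 {t : I} {s : Store I}
    (h : (s, false) ∈ Obs ((TA t).seq ((TA t).seq (LA t)) : Agent I G)) : False := by
  rcases obs_cases h with ⟨-, hm⟩ | ⟨⟨B, hrt, hstuck⟩, -⟩
  · simp at hm
  · have hP := rtg_inv (P := fun c =>
        c = ((some ((TA t).seq ((TA t).seq (LA t))), (0 : Store I)) : Conf I G) ∨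
        c = ((some ((TA t).seq (LA t)), t ::ₘ 0) : Conf I G) ∨
        c = ((some (LA t), t ::ₘ t ::ₘ 0) : Conf I G) ∨ c.1 = none)
        ?_ hrt (Or.inl rfl)
    · rcases hP with h | h | h | h
      · rw [h] at hstuck
        exact hstuck _ (show CStep _ ((some ((TA t).seq (LA t)), t ::ₘ 0) : Conf I G)
          from Step.seqE (step_tell t 0))
      · rw [h] at hstuck
        exact hstuck _ (show CStep _ ((some (LA t), t ::ₘ t ::ₘ 0) : Conf I G)
          from Step.seqE (step_tell t _))
      · rw [h] at hstuck
        exact hstuck _ (show CStep _ ((none, (0 : Store I)) : Conf I G) from la_step_two t)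
      · simp at h
    · intro c d hc hstep
      rcases hc with rfl | rfl | rfl | hnone
      · obtain ⟨od, τd⟩ := d
        obtain ⟨h1, h2⟩ := seq_tell_inv (show Step _ (0 : Store I) od τd from hstep)
        subst h1; subst h2
        exact Or.inr (Or.inl rfl)
      · obtain ⟨od, τd⟩ := d
        obtain ⟨h1, h2⟩ := seq_tell_inv (show Step _ (t ::ₘ 0) od τd from hstep)
        subst h1; subst h2
        exact Or.inr (Or.inr (Or.inl rfl))
      · obtain ⟨od, τd⟩ := d
        have h1 := glist_inv_o (show Step (Agent.glist _ _) _ od τd from hstep)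
        subst h1
        exact Or.inr (Or.inr (Or.inr rfl))
      · obtain ⟨oc, σc⟩ := c
        cases oc with
        | none => exact ((hstep : False).elim)
        | some _ => simp at hnone

/-! ### Memberships -/

lemma mem_gdLg_TA (t : I) :
    (TA t : Agent I G) ∈ gdLg ({PKind.ask, PKind.get, PKind.tell} : Set PKind) :=
  show PKind.tell ∈ ({PKind.ask, PKind.get, PKind.tell} : Set PKind) by simp

lemma mem_gdLg_LA (t : I) :
    (LA t : Agent I G) ∈ gdLg ({PKind.ask, PKind.get, PKind.tell} : Set PKind) := by
  refine ⟨?_, ?_⟩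
  · show PKind.get ∈ ({PKind.ask, PKind.get, PKind.tell} : Set PKind); simp
  · intro q hq
    obtain rfl := List.mem_singleton.mp hq
    show PKind.get ∈ ({PKind.ask, PKind.get, PKind.tell} : Set PKind); simp

lemma nask_not_mem : PKind.nask ∉ ({PKind.ask, PKind.get, PKind.tell} : Set PKind) := by
  intro h
  simp only [Set.mem_insert_iff, Set.mem_singleton_iff] at h
  rcases h with h | h | h <;> cases h

end BachAux

open BachAux in
/-- there is no modular embedding of `gdLg(ask, get, tell)` into
`rLg(ask, get, tell)` (assuming at least two distinct si-terms). -/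
theorem no_modEmbed_ask_get_tell (I G : Type) (a b : I) (hab : a ≠ b) :
    ¬ ModEmbed (gdLg ({PKind.ask, PKind.get, PKind.tell} : Set PKind) : Set (Agent I G))
        (rLg ({PKind.ask, PKind.get, PKind.tell} : Set PKind)) := by
  rintro ⟨C, D, hC, hseq, hpar, hchoice, hD, hobs⟩
  have hTA := mem_gdLg_TA (G := G) a
  have hLA := mem_gdLg_LA (G := G) a
  have hSeq2 : ((TA a).seq (LA a) : Agent I G) ∈
      gdLg ({PKind.ask, PKind.get, PKind.tell} : Set PKind) := ⟨hTA, hLA⟩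
  have hCh : ((LA a).choice (TA a) : Agent I G) ∈
      gdLg ({PKind.ask, PKind.get, PKind.tell} : Set PKind) := ⟨hLA, hTA⟩
  have hA3 : ((TA a).seq ((LA a).choice (TA a)) : Agent I G) ∈
      gdLg ({PKind.ask, PKind.get, PKind.tell} : Set PKind) := ⟨hTA, hCh⟩
  have hA4 : ((TA a).seq ((TA a).seq (LA a)) : Agent I G) ∈
      gdLg ({PKind.ask, PKind.get, PKind.tell} : Set PKind) := ⟨hTA, hSeq2⟩
  -- the images are in rLg
  have hT' : agentIn ({PKind.ask, PKind.get, PKind.tell} : Set PKind) (C (TA a)) ∧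
      glFree (C (TA a)) := hC _ hTA
  have hX' : agentIn ({PKind.ask, PKind.get, PKind.tell} : Set PKind) (C (LA a)) ∧
      glFree (C (LA a)) := hC _ hLA
  -- a successful computation of `C (tell a)`
  have h1 : ((a ::ₘ 0 : Store I), true) ∈ Obs (TA a : Agent I G) :=
    obs_intro_true (Relation.ReflTransGen.single
      (show CStep ((some (TA a), (0 : Store I)) : Conf I G)
        ((none, a ::ₘ 0) : Conf I G) from step_tell a 0))
  rw [hobs _ hTA] at h1
  obtain ⟨x, hxObs, hxD⟩ := h1
  obtain ⟨σ₁, m⟩ := x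
  have hx2 : m = true := by
    have := hD (σ₁, m)
    rw [hxD] at this
    exact this.symm
  subst hx2
  rcases obs_cases hxObs with ⟨hrunT, -⟩ | ⟨-, hm⟩
  swap
  · simp at hm
  -- `C [get a → get a]` is stuck at σ₁
  have hXstuck : ∀ o τ, ¬ Step (C (LA a)) σ₁ o τ := by
    intro o τ hstep
    obtain ⟨c', hrt, hmax⟩ := exists_maximal ((o, τ) : Conf I G)
    obtain ⟨oc, sc⟩ := c'
    cases oc with
    | none =>
      -- a successful computation of `C (tell a ; [get a → get a])`: contradiction
      have hrun : Relation.ReflTransGen CStep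
          ((some ((C (TA a)).seq (C (LA a))), (0 : Store I)) : Conf I G)
          ((none, sc) : Conf I G) := by
        refine Relation.ReflTransGen.trans ?_
          (Relation.ReflTransGen.head
            (show CStep ((some (C (LA a)), σ₁) : Conf I G) ((o, τ) : Conf I G) from hstep)
            hrt)
        exact rtg_seq (C (LA a)) hrunT
      have hmem : (sc, true) ∈ Obs ((C (TA a)).seq (C (LA a))) := obs_intro_true hrun
      rw [← hseq _ _ hTA hLA] at hmem
      have hD2 : D (sc, true) ∈ Obs ((TA a).seq (LA a) : Agent I G) := by
        rw [hobs _ hSeq2]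
        exact Set.mem_image_of_mem D hmem
      have hcon : ((D (sc, true)).1, (D (sc, true)).2) ∈
          Obs ((TA a).seq (LA a) : Agent I G) := by
        rw [Prod.mk.eta]; exact hD2
      rw [hD (sc, true)] at hcon
      exact F2 hcon
    | some B' =>
      -- a deadlocking computation of `C (tell a ; ([get a → get a] + tell a))`
      have hrun : Relation.ReflTransGen CStep
          ((some ((C (TA a)).seq ((C (LA a)).choice (C (TA a)))), (0 : Store I)) : Conf I G)
          ((some B', sc) : Conf I G) := by
        refine Relation.ReflTransGen.trans ?_
          (Relation.ReflTransGen.head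
            (show CStep ((some ((C (LA a)).choice (C (TA a))), σ₁) : Conf I G)
              ((o, τ) : Conf I G) from Step.choiceL hstep)
            hrt)
        exact rtg_seq ((C (LA a)).choice (C (TA a))) hrunT
      have hmem : (sc, false) ∈ Obs ((C (TA a)).seq ((C (LA a)).choice (C (TA a)))) :=
        obs_intro_false hrun hmax
      rw [← hchoice _ _ hLA hTA, ← hseq _ _ hTA hCh] at hmem
      have hD2 : D (sc, false) ∈ Obs ((TA a).seq ((LA a).choice (TA a)) : Agent I G) := by
        rw [hobs _ hA3]
        exact Set.mem_image_of_mem D hmem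
      have hcon : ((D (sc, false)).1, (D (sc, false)).2) ∈
          Obs ((TA a).seq ((LA a).choice (TA a)) : Agent I G) := by
        rw [Prod.mk.eta]; exact hD2
      rw [hD (sc, false)] at hcon
      exact F3 hcon
  -- hence it is also stuck at σ₁ + σ₁ (same support)
  have hXstuck2 : ∀ o τ, ¬ Step (C (LA a)) (σ₁ + σ₁) o τ := by
    intro o τ hstep
    obtain ⟨o', τ', h'⟩ := step_enabled nask_not_mem hstep hX'.2 hX'.1 σ₁
      (fun u hu => (Multiset.mem_add.mp hu).elim id id)
    exact hXstuck o' τ' h'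
  -- a computation of `C (tell a)` from σ₁ to σ₁ + σ₁
  have hrunT2 : Relation.ReflTransGen CStep ((some (C (TA a)), σ₁) : Conf I G)
      ((none, σ₁ + σ₁) : Conf I G) := by
    have h' := (rtg_mono nask_not_mem σ₁ hT'.2 hT'.1 hrunT).1
    rw [zero_add] at h'
    exact h'
  -- a deadlocking computation of `C (tell a ; (tell a ; [get a → get a]))`
  have hrun4 : Relation.ReflTransGen CStep
      ((some ((C (TA a)).seq ((C (TA a)).seq (C (LA a)))), (0 : Store I)) : Conf I G)
      ((some (C (LA a)), σ₁ + σ₁) : Conf I G) := by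
    refine Relation.ReflTransGen.trans
      (rtg_seq ((C (TA a)).seq (C (LA a))) hrunT) ?_
    exact rtg_seq (C (LA a)) hrunT2
  have hmem4 : (σ₁ + σ₁, false) ∈ Obs ((C (TA a)).seq ((C (TA a)).seq (C (LA a)))) :=
    obs_intro_false hrun4 (fun c hc => by
      obtain ⟨oc, τc⟩ := c
      exact hXstuck2 oc τc hc)
  rw [← hseq _ _ hTA hLA, ← hseq _ _ hTA hSeq2] at hmem4
  have hD4 : D (σ₁ + σ₁, false) ∈ Obs ((TA a).seq ((TA a).seq (LA a)) : Agent I G) := by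
    rw [hobs _ hA4]
    exact Set.mem_image_of_mem D hmem4
  have hcon : ((D (σ₁ + σ₁, false)).1, (D (σ₁ + σ₁, false)).2) ∈
      Obs ((TA a).seq ((TA a).seq (LA a)) : Agent I G) := by
    rw [Prod.mk.eta]; exact hD4
  rw [hD (σ₁ + σ₁, false)] at hcon
  exact F4 hcon
end

section
/- There is no modular embedding of gdLg(ask, nask, get, tell) into rLg(ask, nask, get, tell): gdLg(ask, nask, get, tell) ≰ rLg(ask, nask, get, tell). That is, there exist no compositional coder C from the full fragment with guarded lists into the full fragment without guarded lists and element-wise termination-preserving decoder D_el such that for every agent A of gdLg(ask, nask, get, tell), Of(A) = {D_el(x) : x ∈ Of(C(A))}. -/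
open Bach

section NoEmbed

variable {I G : Type}

lemma primStep_double1 {p : Prim I G} {σ τ : Store I} (h : primStep p σ τ) :
    primStep p (σ + σ) (τ + σ) := by
  cases p with
  | tell t =>
      simp only [primStep] at h ⊢; subst h; rw [Multiset.cons_add]
  | ask t =>
      simp only [primStep] at h ⊢
      obtain ⟨h1, rfl⟩ := h
      exact ⟨Multiset.mem_add.2 (Or.inl h1), rfl⟩
  | nask t =>
      simp only [primStep] at h ⊢
      obtain ⟨h1, rfl⟩ := h
      exact ⟨by simp [Multiset.mem_add, h1], rfl⟩
  | get t =>
      simp only [primStep] at h ⊢; subst h; rw [Multiset.cons_add]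
  | gr g =>
      simp only [primStep] at h ⊢; subst h; rfl

lemma primStep_double2 {p : Prim I G} {σ τ : Store I} (h : primStep p σ τ) :
    primStep p (τ + σ) (τ + τ) := by
  cases p with
  | tell t =>
      simp only [primStep] at h ⊢; subst h
      simp only [← Multiset.singleton_add]; abel
  | ask t =>
      simp only [primStep] at h ⊢
      obtain ⟨h1, rfl⟩ := h
      exact ⟨Multiset.mem_add.2 (Or.inl h1), rfl⟩
  | nask t =>
      simp only [primStep] at h ⊢
      obtain ⟨h1, rfl⟩ := h
      exact ⟨by simp [Multiset.mem_add, h1], rfl⟩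
  | get t =>
      simp only [primStep] at h ⊢; subst h
      simp only [← Multiset.singleton_add]; abel
  | gr g =>
      simp only [primStep] at h ⊢; subst h; rfl

lemma glFree_step {A : Agent I G} {σ : Store I} {o} {τ : Store I} (h : Step A σ o τ) :
    glFree A → ∀ A', o = some A' → glFree A' := by
  induction h with
  | prim hp => exact fun _ A' hE => nomatch hE
  | glist h1 h2 => exact fun hA => hA.elim
  | seqE h ih =>
      intro hA A' hE; injection hE with hE; subst hE; exact hA.2
  | seqS h ih =>
      intro hA A' hE; injection hE with hE; subst hE
      exact ⟨ih hA.1 _ rfl, hA.2⟩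
  | parLE h ih =>
      intro hA A' hE; injection hE with hE; subst hE; exact hA.2
  | parLS h ih =>
      intro hA A' hE; injection hE with hE; subst hE
      exact ⟨ih hA.1 _ rfl, hA.2⟩
  | parRE h ih =>
      intro hA A' hE; injection hE with hE; subst hE; exact hA.1
  | parRS h ih =>
      intro hA A' hE; injection hE with hE; subst hE
      exact ⟨hA.1, ih hA.2 _ rfl⟩
  | choiceL h ih => exact fun hA => ih hA.1
  | choiceR h ih => exact fun hA => ih hA.2

lemma step_prim {A : Agent I G} {σ : Store I} {o} {τ : Store I} (h : Step A σ o τ) :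
    glFree A → ∃ p : Prim I G, primStep p σ τ ∧
      ∀ σ' τ' : Store I, primStep p σ' τ' → Step A σ' o τ' := by
  induction h with
  | prim hp => exact fun _ => ⟨_, hp, fun _ _ h' => .prim h'⟩
  | glist h1 h2 => exact fun hA => hA.elim
  | seqE h ih =>
      intro hA
      obtain ⟨p, hp, hl⟩ := ih hA.1
      exact ⟨p, hp, fun _ _ h' => .seqE (hl _ _ h')⟩
  | seqS h ih =>
      intro hA
      obtain ⟨p, hp, hl⟩ := ih hA.1
      exact ⟨p, hp, fun _ _ h' => .seqS (hl _ _ h')⟩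
  | parLE h ih =>
      intro hA
      obtain ⟨p, hp, hl⟩ := ih hA.1
      exact ⟨p, hp, fun _ _ h' => .parLE (hl _ _ h')⟩
  | parLS h ih =>
      intro hA
      obtain ⟨p, hp, hl⟩ := ih hA.1
      exact ⟨p, hp, fun _ _ h' => .parLS (hl _ _ h')⟩
  | parRE h ih =>
      intro hA
      obtain ⟨p, hp, hl⟩ := ih hA.2
      exact ⟨p, hp, fun _ _ h' => .parRE (hl _ _ h')⟩
  | parRS h ih =>
      intro hA
      obtain ⟨p, hp, hl⟩ := ih hA.2
      exact ⟨p, hp, fun _ _ h' => .parRS (hl _ _ h')⟩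
  | choiceL h ih =>
      intro hA
      obtain ⟨p, hp, hl⟩ := ih hA.1
      exact ⟨p, hp, fun _ _ h' => .choiceL (hl _ _ h')⟩
  | choiceR h ih =>
      intro hA
      obtain ⟨p, hp, hl⟩ := ih hA.2
      exact ⟨p, hp, fun _ _ h' => .choiceR (hl _ _ h')⟩

lemma lockstep {τ : Store I} {c : Conf I G}
    (h : Relation.ReflTransGen CStep c ((none, τ) : Conf I G)) :
    ∀ A σ, c = (some A, σ) → glFree A →
      Relation.ReflTransGen CStep ((some (Agent.par A A), σ + σ) : Conf I G)
        ((none, τ + τ) : Conf I G) := by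
  induction h using Relation.ReflTransGen.head_induction_on with
  | refl => intro A σ hc _; simp at hc
  | @head s c' hstep hrest ih =>
      rintro A σ rfl hA
      obtain ⟨o, σ₁⟩ := c'
      have hstep' : Step A σ o σ₁ := hstep
      obtain ⟨p, hp, hlift⟩ := step_prim hstep' hA
      cases o with
      | none =>
          have hτ : σ₁ = τ := by
            rcases hrest.cases_head with hEq | ⟨⟨o', τ'⟩, hd, -⟩
            · exact congrArg Prod.snd hEq
            · exact hd.elim
          subst hτ
          have s1 : CStep ((some (Agent.par A A), σ + σ) : Conf I G) (some A, σ₁ + σ) :=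
            Step.parLE (hlift _ _ (primStep_double1 hp))
          have s2 : CStep ((some A, σ₁ + σ) : Conf I G) (none, σ₁ + σ₁) :=
            hlift _ _ (primStep_double2 hp)
          exact .head s1 (.head s2 .refl)
      | some A' =>
          have hA' : glFree A' := glFree_step hstep' hA A' rfl
          have s1 : CStep ((some (Agent.par A A), σ + σ) : Conf I G)
              (some (Agent.par A' A), σ₁ + σ) :=
            Step.parLS (hlift _ _ (primStep_double1 hp))
          have s2 : CStep ((some (Agent.par A' A), σ₁ + σ) : Conf I G)
              (some (Agent.par A' A'), σ₁ + σ₁) :=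
            Step.parRS (hlift _ _ (primStep_double2 hp))
          exact .head s1 (.head s2 (ih A' σ₁ rfl hA'))

/-- The atomic test-and-set agent `[nask(a) → tell(a)]`. -/
def Ua (a : I) : Agent I G := .glist (.nask a) [.tell a]

lemma Ua_reach {a : I} {c : Conf I G}
    (h : Relation.ReflTransGen CStep
        ((some (Agent.par (Ua a) (Ua a)), 0) : Conf I G) c) :
    c = (some (Agent.par (Ua a) (Ua a)), 0) ∨ c = (some (Ua a), a ::ₘ 0) := by
  induction h with
  | refl => exact Or.inl rfl
  | tail hab hstep ih =>
      rename_i b c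
      rcases ih with rfl | rfl
      · obtain ⟨o, σ⟩ := c
        have hstep' : Step (Agent.par (Ua a) (Ua a)) 0 o σ := hstep
        cases hstep' with
        | parLE h =>
            cases h with
            | glist h1 h2 =>
                obtain ⟨-, rfl⟩ := h1
                obtain ⟨ρ', hp, hl⟩ := h2
                simp only [primStep] at hp
                simp only [listExec] at hl
                subst hp; subst hl
                exact Or.inr rfl
        | parLS h => cases h
        | parRE h =>
            cases h with
            | glist h1 h2 =>
                obtain ⟨-, rfl⟩ := h1
                obtain ⟨ρ', hp, hl⟩ := h2
                simp only [primStep] at hp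
                simp only [listExec] at hl
                subst hp; subst hl
                exact Or.inr rfl
        | parRS h => cases h
      · obtain ⟨o, σ⟩ := c
        have hstep' : Step (Ua a) (a ::ₘ 0) o σ := hstep
        cases hstep' with
        | glist h1 h2 => exact absurd h1.1 (by simp)

end NoEmbed


/-- there is no modular embedding of `gdLg(ask, nask, get, tell)` into
`rLg(ask, nask, get, tell)` (assuming at least two distinct si-terms). -/
theorem no_modEmbed_ask_nask_get_tell (I G : Type) (a b : I) (hab : a ≠ b) :
    ¬ ModEmbed (gdLg ({PKind.ask, PKind.nask, PKind.get, PKind.tell} : Set PKind) : Set (Agent I G))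
        (rLg ({PKind.ask, PKind.nask, PKind.get, PKind.tell} : Set PKind)) := by
  rintro ⟨C, D, hmem, hseq, hpar, hchoice, hD, hobs⟩
  set X4 : Set PKind := {PKind.ask, PKind.nask, PKind.get, PKind.tell} with hX4
  -- U = [nask(a) → tell(a)] is in gdLg
  have hU : (Ua a : Agent I G) ∈ gdLg X4 := by
    constructor
    · simp [primIn, hX4]
    · intro q hq
      simp only [List.mem_singleton] at hq
      subst hq
      simp [primIn, hX4]
  have hUU : (Agent.par (Ua a) (Ua a) : Agent I G) ∈ gdLg X4 := ⟨hU, hU⟩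
  -- U has a successful computation
  have hstepU : Step (Ua a : Agent I G) 0 none (a ::ₘ 0) :=
    Step.glist (ρ := 0) ⟨Multiset.notMem_zero a, rfl⟩ ⟨a ::ₘ 0, rfl, rfl⟩
  have hmemU : ((a ::ₘ 0, true) : Store I × Bool) ∈ Obs (Ua a : Agent I G) :=
    Set.mem_union_left _ ⟨Relation.ReflTransGen.single hstepU, rfl⟩
  -- hence C(U) has a successful computation
  rw [hobs _ hU] at hmemU
  obtain ⟨x, hx, hDx⟩ := hmemU
  have hx2 : x.2 = true := by rw [← hD x, hDx]
  have hrt : Relation.ReflTransGen CStep ((some (C (Ua a)), 0) : Conf I G) (none, x.1) := by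
    rcases hx with h | h
    · exact h.1
    · rw [h.2] at hx2; cases hx2
  have hgf : glFree (C (Ua a)) := (hmem _ hU).2
  -- lockstep: C(U) ∥ C(U) succeeds
  have hls := lockstep hrt (C (Ua a)) 0 rfl hgf
  rw [add_zero] at hls
  have hmem2 : ((x.1 + x.1, true) : Store I × Bool)
      ∈ Obs (Agent.par (C (Ua a)) (C (Ua a))) :=
    Set.mem_union_left _ ⟨hls, rfl⟩
  rw [← hpar _ _ hU hU] at hmem2
  have hmem3 : D (x.1 + x.1, true) ∈ Obs (Agent.par (Ua a) (Ua a) : Agent I G) := by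
    rw [hobs _ hUU]
    exact ⟨_, hmem2, rfl⟩
  have hDt : (D ((x.1 + x.1, true) : Store I × Bool)).2 = true := hD _
  rcases hmem3 with h | h
  · rcases Ua_reach h.1 with hc | hc <;> simp at hc
  · exact Bool.noConfusion (hDt.symm.trans h.2)
end
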